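/- arXiv:2010.12846 — 3 statements merged into one kernel-verified Lean document; each statement's English description precedes it below -/
import Mathlib

section
/- Let n ≥ 1, p ∈ [1,∞), and let ζ : ℝ → (0,∞) be continuous and strictly decreasing such that ∫₀^∞ ζ(t)^p t^(n−1) dt < ∞. If u_k, u ∈ Conv_c^{(n)}(ℝⁿ) are such that ∫_{ℝⁿ} |ζ(u_k(x)) − ζ(u(x))|^p dx → 0, then u_k(x₀) → u(x₀) as k → ∞ for every point x₀ in the interior of the domain {u < +∞} of u. -/
open MeasureTheory Filter Topology Set
open scoped Classical ENNReal

set_option maxHeartbeats 1000000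

noncomputable section

abbrev En (n : ℕ) := EuclideanSpace ℝ (Fin n)

/-- `ζ` applied to an extended real value, with the convention `ζ (+∞) = 0`. -/
def zeval (ζ : ℝ → ℝ) (t : EReal) : ℝ := if t = ⊤ then 0 else ζ t.toReal

/-- The epigraph of an extended-real-valued function. -/
def epiSet {n : ℕ} (u : En n → EReal) : Set (En n × ℝ) := {p | u p.1 ≤ (p.2 : EReal)}

/-- `Conv_c(ℝⁿ)`: proper, lower semicontinuous, convex, coercive functions with
values in `ℝ ∪ {+∞}`. -/
def ConvC (n : ℕ) (u : En n → EReal) : Prop :=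
  (∀ x, u x ≠ ⊥) ∧ (∃ x, u x ≠ ⊤) ∧ LowerSemicontinuous u ∧
    Convex ℝ (epiSet u) ∧ Tendsto u (cocompact (En n)) (𝓝 ⊤)

/-- `Conv_c^{(n)}(ℝⁿ)`: members of `Conv_c(ℝⁿ)` with full-dimensional domain. -/
def ConvCd (n : ℕ) (u : En n → EReal) : Prop :=
  ConvC n u ∧ (interior {x | u x ≠ ⊤}).Nonempty

/-- Epi-convergence of a sequence of extended-real-valued functions. -/
def EpiTendsto {n : ℕ} (u : ℕ → En n → EReal) (v : En n → EReal) : Prop :=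
  ∀ x : En n,
    (∀ y : ℕ → En n, Tendsto y atTop (𝓝 x) →
      v x ≤ Filter.liminf (fun k => u k (y k)) atTop) ∧
    (∃ y : ℕ → En n, Tendsto y atTop (𝓝 x) ∧
      Filter.limsup (fun k => u k (y k)) atTop ≤ v x)

/-- Super-coercivity: `u x / ‖x‖ → +∞` as `‖x‖ → ∞`. -/
def SuperCoercive {n : ℕ} (u : En n → EReal) : Prop :=
  ∀ M : ℝ, ∀ᶠ x in cocompact (En n), ((M * ‖x‖ : ℝ) : EReal) ≤ u x

/-- The functional `δ_{ζ,p}`. -/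
def deltaZP {n : ℕ} (ζ : ℝ → ℝ) (p : ℝ) (u v : En n → EReal) : ℝ :=
  (∫ x : En n, |zeval ζ (u x) - zeval ζ (v x)| ^ p) ^ (1 / p)

/-- The functional `δ_{ζ,1} = δ_ζ`. -/
def delta1 {n : ℕ} (ζ : ℝ → ℝ) (u v : En n → EReal) : ℝ :=
  ∫ x : En n, |zeval ζ (u x) - zeval ζ (v x)|

/-- `f` applied to an extended real value with the convention `f (+∞) = +∞`. -/
def emap (f : ℝ → ℝ) (t : EReal) : EReal := if t = ⊤ then ⊤ else ((f t.toReal : ℝ) : EReal)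

/-- The (convex) indicator function `I^∞_K + t`. -/
def indE {n : ℕ} (K : Set (En n)) (t : ℝ) : En n → EReal :=
  fun x => if x ∈ K then (t : EReal) else ⊤

/-- Nondegenerate parallelotope: Minkowski sum of `n` linearly independent segments. -/
def IsParallelotope {n : ℕ} (P : Set (En n)) : Prop :=
  ∃ (z : En n) (b : Fin n → En n), LinearIndependent ℝ b ∧
    P = (fun c : Fin n → ℝ => z + ∑ i, c i • b i) '' (Set.univ.pi fun _ => Set.Icc (0:ℝ) 1)

/-- Convex body with nonempty interior. -/
def IsConvexBodyI {n : ℕ} (K : Set (En n)) : Prop :=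
  IsCompact K ∧ Convex ℝ K ∧ (interior K).Nonempty

/-- Convex body: nonempty compact convex set. -/
def IsCB {n : ℕ} (K : Set (En n)) : Prop := K.Nonempty ∧ IsCompact K ∧ Convex ℝ K

/-- The extension `d̂_H` of the Hausdorff metric to `K(ℝⁿ) ∪ {∅}`. -/
def dhatH {n : ℕ} (K L : Set (En n)) : ℝ :=
  if K = ∅ then (if L = ∅ then 0 else max 1 (Metric.hausdorffDist L {0}))
  else if L = ∅ then max 1 (Metric.hausdorffDist K {0})
  else Metric.hausdorffDist K L

/-- The functional `δ_ζ^H`. -/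
def deltaH {n : ℕ} (ζ : ℝ → ℝ) (u v : En n → EReal) : ℝ :=
  ∫ s in Set.Ioi (0:ℝ), dhatH {x | s ≤ zeval ζ (u x)} {x | s ≤ zeval ζ (v x)}

/-- The Legendre–Fenchel conjugate. -/
def conjF {n : ℕ} (u : En n → EReal) : En n → EReal :=
  fun y => ⨆ x : En n, (((inner ℝ x y : ℝ) : EReal) - u x)

/-- The admissible set in the definition of the Hausdorff-type metric `δ` of Section 5.2:
`λ > 0` such that `‖u^* - v^*‖_{∞, (1/λ)Bⁿ} ≤ λ`. -/
def DSet {n : ℕ} (u v : En n → EReal) : Set ℝ :=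
  {l : ℝ | 0 < l ∧ ∀ x : En n, ‖x‖ ≤ 1 / l →
    conjF u x ≤ conjF v x + (l : EReal) ∧ conjF v x ≤ conjF u x + (l : EReal)}

/-- The Hausdorff-type metric `δ` of Section 5.2. -/
def deltaStar {n : ℕ} (u v : En n → EReal) : ℝ := sInf (DSet u v)


section Aux

open Metric

variable {n : ℕ}

lemma measurable_zeval {ζ : ℝ → ℝ} (hζ : Continuous ζ) : Measurable (zeval ζ) := by
  have h : Measurable fun t : EReal => ζ t.toReal :=
    hζ.measurable.comp measurable_ereal_toReal
  exact Measurable.ite (measurableSet_singleton ⊤) measurable_const h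

lemma zeval_nonneg {ζ : ℝ → ℝ} (hζ : ∀ t, 0 < ζ t) (t : EReal) : 0 ≤ zeval ζ t := by
  unfold zeval
  split
  · exact le_rfl
  · exact (hζ _).le

lemma zeval_coe {ζ : ℝ → ℝ} {t : EReal} (h : t ≠ ⊤) : zeval ζ t = ζ t.toReal := by
  simp [zeval, h]

lemma epi_le {w : En n → EReal} (hc : Convex ℝ (epiSet w)) {x y : En n} {s r : ℝ}
    (hx : w x ≤ (s : EReal)) (hy : w y ≤ (r : EReal)) {t₁ t₂ : ℝ}
    (h1 : 0 ≤ t₁) (h2 : 0 ≤ t₂) (h12 : t₁ + t₂ = 1) :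
    w (t₁ • x + t₂ • y) ≤ ((t₁ * s + t₂ * r : ℝ) : EReal) := by
  have hmx : ((x, s) : En n × ℝ) ∈ epiSet w := hx
  have hmy : ((y, r) : En n × ℝ) ∈ epiSet w := hy
  have := hc hmx hmy h1 h2 h12
  simpa [epiSet, Prod.smul_mk, smul_eq_mul] using this

lemma lsc_bddBelow {w : En n → EReal} (hl : LowerSemicontinuous w) (hb : ∀ x, w x ≠ ⊥)
    {K : Set (En n)} (hK : IsCompact K) : ∃ r₀ : ℝ, ∀ x ∈ K, (r₀ : EReal) ≤ w x := by
  have hopen : ∀ q : ℚ, IsOpen {y | (((q : ℝ) : EReal)) < w y} := fun q =>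
    hl.isOpen_preimage _
  have hcov : K ⊆ ⋃ q : ℚ, {y | (((q : ℝ) : EReal)) < w y} := by
    intro x _
    have : ∃ q : ℚ, (((q : ℝ) : EReal)) < w x := by
      rcases eq_or_ne (w x) ⊤ with h | h
      · exact ⟨0, by simp [h]⟩
      · obtain ⟨q, hq⟩ := exists_rat_lt (w x).toReal
        refine ⟨q, ?_⟩
        rw [← EReal.coe_toReal h (hb x)]
        exact_mod_cast hq
    exact mem_iUnion.2 this
  obtain ⟨F, hF⟩ := hK.elim_finite_subcover _ hopen hcov
  rcases F.eq_empty_or_nonempty with rfl | hFne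
  · exact ⟨0, fun x hx => absurd (hF hx) (by simp)⟩
  · refine ⟨((F.min' hFne : ℚ) : ℝ), fun x hx => ?_⟩
    obtain ⟨q, hqF, hq⟩ := Set.mem_iUnion₂.1 (hF hx)
    refine le_trans ?_ hq.le
    have : ((F.min' hFne : ℚ) : ℝ) ≤ ((q : ℚ) : ℝ) := by
      exact_mod_cast F.min'_le q hqF
    exact_mod_cast this

lemma conv_lin_growth {w : En n → EReal} (hw : ConvC n w) :
    ∃ a b : ℝ, 0 < a ∧ ∀ x, ((a * ‖x‖ - b : ℝ) : EReal) ≤ w x := by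
  obtain ⟨hbot, ⟨x₁, hx₁⟩, hlsc, hconv, hcoer⟩ := hw
  set m : ℝ := (w x₁).toReal with hm
  have hwx₁ : w x₁ = (m : EReal) := (EReal.coe_toReal hx₁ (hbot x₁)).symm
  have hmem : w ⁻¹' (Set.Ioi (((m + 1 : ℝ) : EReal))) ∈ cocompact (En n) :=
    hcoer (Ioi_mem_nhds (EReal.coe_lt_top _))
  obtain ⟨K, hKc, hKsub⟩ := mem_cocompact.1 hmem
  obtain ⟨r₁, hKr⟩ := hKc.isBounded.subset_closedBall x₁
  set R : ℝ := max r₁ 0 + 1 with hR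
  have hRpos : 0 < R := by positivity
  have hfar : ∀ y : En n, ‖y - x₁‖ = R → ((m + 1 : ℝ) : EReal) < w y := by
    intro y hy
    have : y ∉ K := by
      intro hyK
      have := hKr hyK
      rw [mem_closedBall, dist_eq_norm] at this
      rw [hy] at this
      have : R ≤ r₁ := this
      simp only [hR] at this
      nlinarith [le_max_left r₁ (0:ℝ), le_max_right r₁ (0:ℝ)]
    exact hKsub this
  obtain ⟨r₀, hr₀⟩ := lsc_bddBelow hlsc hbot (isCompact_closedBall x₁ R)
  refine ⟨R⁻¹, max (R⁻¹ * (‖x₁‖ + R) - r₀) (R⁻¹ * ‖x₁‖ - m), by positivity, fun x => ?_⟩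
  set b : ℝ := max (R⁻¹ * (‖x₁‖ + R) - r₀) (R⁻¹ * ‖x₁‖ - m) with hb
  rcases le_or_gt ‖x - x₁‖ R with hnear | hfar'
  · have h1 : (r₀ : EReal) ≤ w x := hr₀ x (by rwa [mem_closedBall, dist_eq_norm])
    refine le_trans ?_ h1
    rw [EReal.coe_le_coe_iff]
    have hxn : ‖x‖ ≤ ‖x₁‖ + R := by
      have h2 := norm_sub_norm_le x x₁
      linarith
    have hb1 : R⁻¹ * (‖x₁‖ + R) - r₀ ≤ b := le_max_left _ _
    have h3 : R⁻¹ * ‖x‖ ≤ R⁻¹ * (‖x₁‖ + R) :=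
      mul_le_mul_of_nonneg_left hxn (by positivity)
    linarith
  · rcases eq_or_ne (w x) ⊤ with htop | htop
    · rw [htop]; exact le_top
    set d : ℝ := ‖x - x₁‖ with hd
    have hdpos : 0 < d := lt_trans hRpos hfar'
    set t : ℝ := R / d with ht
    have ht0 : 0 < t := div_pos hRpos hdpos
    have ht1 : t < 1 := (div_lt_one hdpos).2 hfar'
    set s : ℝ := (w x).toReal with hs
    have hwx : w x = (s : EReal) := (EReal.coe_toReal htop (hbot x)).symm
    have hy := epi_le hconv hwx₁.le hwx.le (by linarith : (0:ℝ) ≤ 1 - t) ht0.le (by ring)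
    have hyn : ‖((1 - t) • x₁ + t • x) - x₁‖ = R := by
      have heq : ((1 - t) • x₁ + t • x) - x₁ = t • (x - x₁) := by module
      rw [heq, norm_smul, Real.norm_eq_abs, abs_of_pos ht0, ← hd, ht,
        div_mul_cancel₀ _ hdpos.ne']
    have hlt := lt_of_lt_of_le (hfar _ hyn) hy
    rw [EReal.coe_lt_coe_iff] at hlt
    have h2 : d < R * (s - m) := by
      have h1t : 1 < t * (s - m) := by nlinarith
      rw [ht, div_mul_eq_mul_div, lt_div_iff₀ hdpos] at h1t
      linarith
    have h3 : d / R < s - m := (div_lt_iff₀ hRpos).2 (by linarith)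
    rw [hwx, EReal.coe_le_coe_iff]
    have hb2 : R⁻¹ * ‖x₁‖ - m ≤ b := le_max_right _ _
    have hxd : R⁻¹ * ‖x‖ ≤ R⁻¹ * ‖x₁‖ + R⁻¹ * d := by
      have h4 := norm_sub_norm_le x x₁
      nlinarith [inv_pos.2 hRpos]
    have h5 : R⁻¹ * d = d / R := by rw [inv_mul_eq_div]
    linarith

lemma integrable_of_radial (hn : 1 ≤ n) {f : ℝ → ℝ} (hf : Measurable f)
    (h : IntegrableOn (fun y => y ^ (n - 1) * f y) (Set.Ioi (0:ℝ))) :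
    Integrable (fun x : En n => f ‖x‖) := by
  haveI : Nonempty (Fin n) := ⟨⟨0, hn⟩⟩
  have hdim : Module.finrank ℝ (En n) = n := finrank_euclideanSpace_fin
  haveI : Nontrivial (En n) := by
    refine Module.nontrivial_of_finrank_pos (R := ℝ) ?_
    rw [hdim]; exact hn
  have h5 : Integrable (fun y : Set.Ioi (0:ℝ) => f y) (Measure.volumeIoiPow (n - 1)) := by
    rw [Measure.volumeIoiPow, integrable_withDensity_iff
      ((measurable_subtype_coe.pow_const _).ennreal_ofReal)
      (Filter.Eventually.of_forall fun x => ENNReal.ofReal_lt_top)]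
    have heq : (fun y : Set.Ioi (0:ℝ) => f y * (ENNReal.ofReal ((y:ℝ) ^ (n-1))).toReal)
        = (fun t : ℝ => t ^ (n-1) * f t) ∘ (Subtype.val) := by
      funext y
      have hy : (0:ℝ) ≤ (y:ℝ) ^ (n-1) := pow_nonneg (le_of_lt y.2) _
      simp [Function.comp, ENNReal.toReal_ofReal hy, mul_comm]
    rw [heq, ← (MeasurableEmbedding.subtype_coe measurableSet_Ioi).integrable_map_iff,
      map_comap_subtype_coe measurableSet_Ioi]
    exact h
  have key : Integrable (f ∘ Subtype.val ∘ Prod.snd)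
      ((volume : Measure (En n)).toSphere.prod (Measure.volumeIoiPow (n - 1))) := by
    have h6 : Integrable (fun _ : Metric.sphere (0 : En n) 1 => (1:ℝ))
        ((volume : Measure (En n)).toSphere) := integrable_const _
    have := h6.smul_prod h5
    simp only [one_smul] at this
    exact this
  have h2 : Integrable (fun x : ({0}ᶜ : Set (En n)) => f ‖(x : En n)‖)
      ((volume : Measure (En n)).comap Subtype.val) := by
    have hcomp : (fun x : ({0}ᶜ : Set (En n)) => f ‖(x : En n)‖)
        = (f ∘ Subtype.val ∘ Prod.snd) ∘ (homeomorphUnitSphereProd (En n)) := by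
      funext x; simp [Function.comp]
    rw [hcomp, MeasurePreserving.integrable_comp_emb
      (Measure.measurePreserving_homeomorphUnitSphereProd volume)
      (Homeomorph.measurableEmbedding _)]
    rw [hdim]
    exact key
  have h3 : IntegrableOn (fun x : En n => f ‖x‖) ({(0 : En n)}ᶜ) := by
    rw [IntegrableOn, ← map_comap_subtype_coe (measurableSet_singleton (0 : En n)).compl,
      (MeasurableEmbedding.subtype_coe (measurableSet_singleton (0 : En n)).compl).integrable_map_iff]
    exact h2
  rw [IntegrableOn, restrict_compl_singleton] at h3
  exact h3

lemma mom_shift (hn : 1 ≤ n) {p : ℝ} (hp : 1 ≤ p) {ζ : ℝ → ℝ}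
    (hζpos : ∀ t, 0 < ζ t) (hζcont : Continuous ζ) (hζanti : StrictAnti ζ)
    (hmom : IntegrableOn (fun t => ζ t ^ p * t ^ (n - 1)) (Set.Ioi (0:ℝ)))
    {a b : ℝ} (ha : 0 < a) :
    IntegrableOn (fun t : ℝ => t ^ (n - 1) * ζ (a * t - b) ^ p) (Set.Ioi (0:ℝ)) := by
  have hcont : Continuous (fun t : ℝ => t ^ (n - 1) * ζ (a * t - b) ^ p) := by
    refine (continuous_pow _).mul ?_
    exact (hζcont.comp ((continuous_const.mul continuous_id).sub continuous_const)).rpow_const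
      (fun x => Or.inl (hζpos _).ne')
  set T : ℝ := max 1 (2 * b / a) with hT
  have hT1 : (1:ℝ) ≤ T := le_max_left _ _
  have hT0 : (0:ℝ) < T := lt_of_lt_of_le one_pos hT1
  rw [← Set.Ioc_union_Ioi_eq_Ioi hT0.le]
  refine IntegrableOn.union ?_ ?_
  · exact hcont.integrableOn_Ioc
  · have hGint : IntegrableOn (fun t => ζ (a / 2 * t) ^ p * (a / 2 * t) ^ (n - 1))
        (Set.Ioi (0:ℝ)) := by
      have h2 := (integrableOn_Ioi_comp_mul_left_iff (fun t => ζ t ^ p * t ^ (n - 1)) 0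
        (by positivity : (0:ℝ) < a / 2)).2
      simpa using h2 (by simpa using hmom)
    have hmain : IntegrableOn
        (fun t => (2 / a) ^ (n - 1) * (ζ (a / 2 * t) ^ p * (a / 2 * t) ^ (n - 1)))
        (Set.Ioi T) :=
      ((hGint.mono_set (Set.Ioi_subset_Ioi hT0.le)).const_mul _)
    refine Integrable.mono' hmain hcont.aestronglyMeasurable.restrict ?_
    rw [ae_restrict_iff' measurableSet_Ioi]
    refine Filter.Eventually.of_forall fun t ht => ?_
    rw [Set.mem_Ioi] at ht
    have htpos : 0 < t := lt_trans hT0 ht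
    have hle : a / 2 * t ≤ a * t - b := by
      have h1 : 2 * b / a ≤ t := le_trans (le_max_right _ _) ht.le
      have h2 : 2 * b ≤ a * t := by
        rw [div_le_iff₀ ha] at h1; linarith
      linarith
    have hz : ζ (a * t - b) ≤ ζ (a / 2 * t) := hζanti.antitone hle
    have hrpow : ζ (a * t - b) ^ p ≤ ζ (a / 2 * t) ^ p :=
      Real.rpow_le_rpow (hζpos _).le hz (by linarith)
    have hnorm : ‖t ^ (n - 1) * ζ (a * t - b) ^ p‖ = t ^ (n - 1) * ζ (a * t - b) ^ p := by
      rw [Real.norm_eq_abs, abs_of_nonneg]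
      exact mul_nonneg (pow_nonneg htpos.le _) (Real.rpow_nonneg (hζpos _).le _)
    rw [hnorm]
    have hpoweq : (2 / a) ^ (n - 1) * (a / 2 * t) ^ (n - 1) = t ^ (n - 1) := by
      rw [← mul_pow]
      congr 1
      field_simp
    calc t ^ (n - 1) * ζ (a * t - b) ^ p
        ≤ t ^ (n - 1) * ζ (a / 2 * t) ^ p :=
          mul_le_mul_of_nonneg_left hrpow (pow_nonneg htpos.le _)
      _ = (2 / a) ^ (n - 1) * (ζ (a / 2 * t) ^ p * (a / 2 * t) ^ (n - 1)) := by
          rw [← hpoweq]; ring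

lemma integrand_integrable (hn : 1 ≤ n) {p : ℝ} (hp : 1 ≤ p) {ζ : ℝ → ℝ}
    (hζpos : ∀ t, 0 < ζ t) (hζcont : Continuous ζ) (hζanti : StrictAnti ζ)
    (hmom : IntegrableOn (fun t => ζ t ^ p * t ^ (n - 1)) (Set.Ioi (0:ℝ)))
    {w w' : En n → EReal} (hw : ConvC n w) (hw' : ConvC n w') :
    Integrable (fun x : En n => |zeval ζ (w x) - zeval ζ (w' x)| ^ p) := by
  obtain ⟨a, b, ha, hab⟩ := conv_lin_growth hw
  obtain ⟨a', b', ha', hab'⟩ := conv_lin_growth hw'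
  have ha₀pos : 0 < min a a' := lt_min ha ha'
  have hmaj : Integrable (fun x : En n => (2:ℝ) ^ p * ζ (min a a' * ‖x‖ - max b b') ^ p) := by
    have hfm : Measurable (fun t : ℝ => ζ (min a a' * t - max b b') ^ p) := by
      exact ((hζcont.comp ((continuous_const.mul continuous_id).sub continuous_const)).rpow_const
        (fun x => Or.inl (hζpos _).ne')).measurable
    exact ((integrable_of_radial hn hfm
      (mom_shift hn hp hζpos hζcont hζanti hmom ha₀pos)).const_mul _)
  have hkey : ∀ (w₁ : En n → EReal) (a₁ b₁ : ℝ), min a a' ≤ a₁ → b₁ ≤ max b b' →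
      (∀ x, ((a₁ * ‖x‖ - b₁ : ℝ) : EReal) ≤ w₁ x) → (∀ x, w₁ x ≠ ⊥) →
      ∀ x, zeval ζ (w₁ x) ≤ ζ (min a a' * ‖x‖ - max b b') := by
    intro w₁ a₁ b₁ haa hbb hgrow hbot x
    rcases eq_or_ne (w₁ x) ⊤ with h | h
    · rw [zeval, if_pos h]
      exact (hζpos _).le
    · rw [zeval_coe h]
      apply hζanti.antitone
      have h1 : min a a' * ‖x‖ - max b b' ≤ a₁ * ‖x‖ - b₁ := by
        have := mul_le_mul_of_nonneg_right haa (norm_nonneg x)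
        linarith
      refine le_trans h1 ?_
      have h2 := hgrow x
      rw [← EReal.coe_toReal h (hbot x), EReal.coe_le_coe_iff] at h2
      exact h2
  refine hmaj.mono' ?_ (Filter.Eventually.of_forall fun x => ?_)
  · have h1 : Measurable fun x : En n => zeval ζ (w x) :=
      (measurable_zeval hζcont).comp hw.2.2.1.measurable
    have h2 : Measurable fun x : En n => zeval ζ (w' x) :=
      (measurable_zeval hζcont).comp hw'.2.2.1.measurable
    exact ((Real.continuous_rpow_const (by linarith : (0:ℝ) ≤ p)).measurable.comp
      (h1.sub h2).abs).aestronglyMeasurable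
  · have hA0 : 0 ≤ zeval ζ (w x) := zeval_nonneg hζpos _
    have hB0 : 0 ≤ zeval ζ (w' x) := zeval_nonneg hζpos _
    have hAM : zeval ζ (w x) ≤ ζ (min a a' * ‖x‖ - max b b') :=
      hkey w a b (min_le_left _ _) (le_max_left _ _) hab hw.1 x
    have hBM : zeval ζ (w' x) ≤ ζ (min a a' * ‖x‖ - max b b') :=
      hkey w' a' b' (min_le_right _ _) (le_max_right _ _) hab' hw'.1 x
    have habs : |zeval ζ (w x) - zeval ζ (w' x)| ≤ 2 * ζ (min a a' * ‖x‖ - max b b') := by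
      rw [abs_sub_le_iff]; constructor <;> linarith
    have h1 : ‖|zeval ζ (w x) - zeval ζ (w' x)| ^ p‖
        = |zeval ζ (w x) - zeval ζ (w' x)| ^ p := by
      rw [Real.norm_eq_abs, abs_of_nonneg (Real.rpow_nonneg (abs_nonneg _) _)]
    rw [h1]
    calc |zeval ζ (w x) - zeval ζ (w' x)| ^ p
        ≤ (2 * ζ (min a a' * ‖x‖ - max b b')) ^ p :=
          Real.rpow_le_rpow (abs_nonneg _) habs (by linarith)
      _ = (2:ℝ) ^ p * ζ (min a a' * ‖x‖ - max b b') ^ p :=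
          Real.mul_rpow (by norm_num) (hζpos _).le

lemma cheb {F : En n → ℝ} (hF : Integrable F) (h0 : ∀ x, 0 ≤ F x) {S : Set (En n)}
    (hS : MeasurableSet S) (hSfin : volume S ≠ ⊤) {d : ℝ}
    (hFS : ∀ x ∈ S, d ≤ F x) : d * (volume S).toReal ≤ ∫ x, F x := by
  have h1 : ∫ _x in S, d ≤ ∫ x in S, F x :=
    setIntegral_mono_on (integrableOn_const hSfin) hF.integrableOn hS hFS
  rw [setIntegral_const, smul_eq_mul] at h1
  have h2 : ∫ x in S, F x ≤ ∫ x, F x :=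
    setIntegral_le_integral hF (Filter.Eventually.of_forall h0)
  calc d * (volume S).toReal = (volume S).toReal * d := by ring
    _ ≤ ∫ x in S, F x := h1
    _ ≤ ∫ x, F x := h2

end Aux

theorem statement3 (n : ℕ) (hn : 1 ≤ n) (p : ℝ) (hp : 1 ≤ p)
    (ζ : ℝ → ℝ) (hζpos : ∀ t, 0 < ζ t) (hζcont : Continuous ζ) (hζanti : StrictAnti ζ)
    (hmom : IntegrableOn (fun t => ζ t ^ p * t ^ (n - 1)) (Set.Ioi (0:ℝ)))
    (u : ℕ → En n → EReal) (v : En n → EReal)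
    (hu : ∀ k, ConvCd n (u k)) (hv : ConvCd n v)
    (hconv : Tendsto (fun k => ∫ x : En n, |zeval ζ (u k x) - zeval ζ (v x)| ^ p)
      atTop (𝓝 0)) :
    ∀ x₀ ∈ interior {x | v x ≠ ⊤}, Tendsto (fun k => u k x₀) atTop (𝓝 (v x₀)) := by
  intro x₀ hx₀
  obtain ⟨⟨hvbot, hvprop, hvlsc, hvconv, hvcoer⟩, hvdim⟩ := hv
  have hDopen : IsOpen (interior {x | v x ≠ ⊤}) := isOpen_interior
  set f : En n → ℝ := fun x => (v x).toReal with hf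
  have hvne : ∀ x ∈ interior {x | v x ≠ ⊤}, v x ≠ ⊤ := fun x hx => interior_subset hx
  have hvD : ∀ x ∈ interior {x | v x ≠ ⊤}, v x = ((f x : ℝ) : EReal) := fun x hx =>
    (EReal.coe_toReal (hvne x hx) (hvbot x)).symm
  have hDconv : Convex ℝ {x | v x ≠ ⊤} := by
    intro x hx y hy t₁ t₂ h1 h2 h12
    simp only [Set.mem_setOf_eq] at hx hy ⊢
    have hle := epi_le hvconv (EReal.coe_toReal hx (hvbot x)).symm.le
      (EReal.coe_toReal hy (hvbot y)).symm.le h1 h2 h12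
    intro htop
    rw [htop] at hle
    exact EReal.coe_ne_top _ (top_le_iff.1 hle)
  have hfconv : ConvexOn ℝ {x | v x ≠ ⊤} f := by
    refine ⟨hDconv, fun x hx y hy t₁ t₂ h1 h2 h12 => ?_⟩
    simp only [Set.mem_setOf_eq] at hx hy
    have hle := epi_le hvconv (EReal.coe_toReal hx (hvbot x)).symm.le
      (EReal.coe_toReal hy (hvbot y)).symm.le h1 h2 h12
    have h3 := EReal.toReal_le_toReal hle (hvbot _) (EReal.coe_ne_top _)
    rw [EReal.toReal_coe] at h3
    simpa [smul_eq_mul] using h3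
  have hfcont : ContinuousAt f x₀ :=
    hfconv.continuousOn_interior.continuousAt (hDopen.mem_nhds hx₀)
  set A : ℝ := f x₀ with hA
  have hvx₀ : v x₀ = (A : EReal) := hvD x₀ hx₀
  suffices main : ∀ ε : ℝ, 0 < ε →
      ∀ᶠ k in atTop, ((A - ε : ℝ) : EReal) < u k x₀ ∧ u k x₀ < ((A + ε : ℝ) : EReal) by
    rw [hvx₀, tendsto_order]
    constructor
    · intro l hl
      induction l using EReal.rec with
      | bot => exact (main 1 one_pos).mono fun k hk => lt_trans (EReal.bot_lt_coe _) hk.1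
      | coe c =>
        rw [EReal.coe_lt_coe_iff] at hl
        refine (main (A - c) (by linarith)).mono fun k hk => ?_
        have hAc : A - (A - c) = c := by ring
        rw [hAc] at hk
        exact hk.1
      | top => exact absurd hl (not_lt.2 le_top)
    · intro l hl
      induction l using EReal.rec with
      | bot => exact absurd hl (not_lt.2 bot_le)
      | coe c =>
        have hl' : A < c := EReal.coe_lt_coe_iff.1 hl
        refine (main (c - A) (by linarith)).mono fun k hk => ?_
        have hAc : A + (c - A) = c := by ring
        rw [hAc] at hk
        exact hk.2
      | top => exact (main 1 one_pos).mono fun k hk => lt_of_lt_of_le hk.2 le_top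
  intro ε hε
  set c : ℝ := min (ζ (A + ε/8)) (min (ζ (A + ε/8) - ζ (A + ε/2)) (ζ (A - ε/2) - ζ (A - ε/8)))
    with hcdef
  have hc : 0 < c := by
    rw [hcdef]
    exact lt_min (hζpos _) (lt_min (sub_pos.2 (hζanti (by linarith)))
      (sub_pos.2 (hζanti (by linarith))))
  have hcle1 : c ≤ ζ (A + ε/8) := by rw [hcdef]; exact min_le_left _ _
  have hcle2 : c ≤ ζ (A + ε/8) - ζ (A + ε/2) := by
    rw [hcdef]; exact le_trans (min_le_right _ _) (min_le_left _ _)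
  have hcle3 : c ≤ ζ (A - ε/2) - ζ (A - ε/8) := by
    rw [hcdef]; exact le_trans (min_le_right _ _) (min_le_right _ _)
  set c5 : ℝ := ζ (A - ε/4) - ζ (A - ε/8) with hc5def
  have hc5 : 0 < c5 := by
    rw [hc5def]; exact sub_pos.2 (hζanti (by linarith))
  have hev : ∀ᶠ x in 𝓝 x₀, x ∈ interior {x | v x ≠ ⊤} ∧ |f x - A| ≤ ε/8 := by
    filter_upwards [hDopen.mem_nhds hx₀,
      hfcont (Metric.closedBall_mem_nhds A (by positivity : (0:ℝ) < ε/8))] with x h1x h2x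
    exact ⟨h1x, by rwa [Set.mem_preimage, Metric.mem_closedBall, Real.dist_eq] at h2x⟩
  obtain ⟨r, hr0, hrB⟩ := Metric.nhds_basis_closedBall.eventually_iff.1 hev
  set B : Set (En n) := Metric.closedBall x₀ r with hB
  have hBD : ∀ x ∈ B, x ∈ interior {x | v x ≠ ⊤} := fun x hx => (hrB hx).1
  have hBf : ∀ x ∈ B, |f x - A| ≤ ε/8 := fun x hx => (hrB hx).2
  have hBmeas : MeasurableSet B := measurableSet_closedBall
  have hBfin : volume B ≠ ⊤ := measure_closedBall_lt_top.ne
  have hMB : 0 < (volume B).toReal :=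
    ENNReal.toReal_pos (Metric.measure_closedBall_pos volume x₀ hr0).ne' hBfin
  have hFint : ∀ k, Integrable (fun x : En n => |zeval ζ (u k x) - zeval ζ (v x)| ^ p) :=
    fun k => integrand_integrable hn hp hζpos hζcont hζanti hmom (hu k).1
      ⟨hvbot, hvprop, hvlsc, hvconv, hvcoer⟩
  have hFnn : ∀ k, ∀ x : En n, 0 ≤ |zeval ζ (u k x) - zeval ζ (v x)| ^ p :=
    fun k x => Real.rpow_nonneg (abs_nonneg _) _
  have hgmeas : ∀ k, Measurable (fun x : En n => |zeval ζ (u k x) - zeval ζ (v x)|) :=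
    fun k => (((measurable_zeval hζcont).comp (hu k).1.2.2.1.measurable).sub
      ((measurable_zeval hζcont).comp hvlsc.measurable)).abs
  have hdpos : 0 < c ^ p := Real.rpow_pos_of_pos hc _
  have hd5pos : 0 < c5 ^ p := Real.rpow_pos_of_pos hc5 _
  set θ : ℝ := min (c ^ p * ((volume B).toReal / 2))
      (c5 ^ p * ((2:ℝ)⁻¹ ^ n * ((volume B).toReal / 2))) with hθdef
  have hθpos : 0 < θ := by
    rw [hθdef]
    exact lt_min (by positivity) (by positivity)
  have hθ1 : θ ≤ c ^ p * ((volume B).toReal / 2) := by rw [hθdef]; exact min_le_left _ _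
  have hθ2 : θ ≤ c5 ^ p * ((2:ℝ)⁻¹ ^ n * ((volume B).toReal / 2)) := by
    rw [hθdef]; exact min_le_right _ _
  filter_upwards [hconv.eventually (gt_mem_nhds hθpos)] with k hk
  have hvnetop : ∀ x ∈ B, v x ≠ ⊤ := fun x hx => interior_subset (hBD x hx)
  have hzv : ∀ x ∈ B, zeval ζ (v x) = ζ (f x) := fun x hx => zeval_coe (hvnetop x hx)
  have hGood : ∀ x ∈ B, |zeval ζ (u k x) - zeval ζ (v x)| < c →
      u k x ≠ ⊤ ∧ A - ε/2 < (u k x).toReal ∧ (u k x).toReal < A + ε/2 := by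
    intro x hxB hlt
    obtain ⟨hfb1, hfb2⟩ := abs_sub_le_iff.1 (hBf x hxB)
    rw [hzv x hxB] at hlt
    have hne : u k x ≠ ⊤ := by
      intro htop
      rw [zeval, if_pos htop, zero_sub, abs_neg, abs_of_pos (hζpos _)] at hlt
      have h1 : ζ (A + ε/8) ≤ ζ (f x) := hζanti.antitone (by linarith)
      linarith
    rw [zeval_coe hne] at hlt
    refine ⟨hne, ?_, ?_⟩
    · by_contra hcon
      push_neg at hcon
      have h1 : ζ (A - ε/2) ≤ ζ ((u k x).toReal) := hζanti.antitone hcon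
      have h2 : ζ (f x) ≤ ζ (A - ε/8) := hζanti.antitone (by linarith)
      have h4 : ζ ((u k x).toReal) - ζ (f x) ≤ |ζ ((u k x).toReal) - ζ (f x)| := le_abs_self _
      linarith
    · by_contra hcon
      push_neg at hcon
      have h1 : ζ ((u k x).toReal) ≤ ζ (A + ε/2) := hζanti.antitone hcon
      have h2 : ζ (A + ε/8) ≤ ζ (f x) := hζanti.antitone (by linarith)
      have h4 : ζ (f x) - ζ ((u k x).toReal) ≤ |ζ ((u k x).toReal) - ζ (f x)| := by
        rw [abs_sub_comm]; exact le_abs_self _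
      linarith
  set Bad : Set (En n) := B ∩ {x | c ≤ |zeval ζ (u k x) - zeval ζ (v x)|} with hBaddef
  have hBadmeas : MeasurableSet Bad :=
    hBmeas.inter (measurableSet_le measurable_const (hgmeas k))
  have hBadsub : Bad ⊆ B := Set.inter_subset_left
  have hBadfin : volume Bad ≠ ⊤ := (lt_of_le_of_lt (measure_mono hBadsub) hBfin.lt_top).ne
  have hBadbound : (volume Bad).toReal < (volume B).toReal / 2 := by
    have hgeq : ∀ x ∈ Bad, c ^ p ≤ |zeval ζ (u k x) - zeval ζ (v x)| ^ p := fun x hx =>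
      Real.rpow_le_rpow hc.le hx.2 (by linarith)
    have h1 := cheb (hFint k) (hFnn k) hBadmeas hBadfin hgeq
    have h2 : c ^ p * (volume Bad).toReal < c ^ p * ((volume B).toReal / 2) :=
      lt_of_le_of_lt h1 (lt_of_lt_of_le hk hθ1)
    exact lt_of_mul_lt_mul_left h2 hdpos.le
  have hGoodpt : ∀ z ∈ B \ Bad,
      u k z ≠ ⊤ ∧ A - ε/2 < (u k z).toReal ∧ (u k z).toReal < A + ε/2 := by
    intro z hz
    refine hGood z hz.1 ?_
    by_contra hcon
    exact hz.2 ⟨hz.1, not_lt.1 hcon⟩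
  set R : En n → En n := fun z => AffineMap.homothety x₀ (-1 : ℝ) z with hRdef
  have hRz : ∀ z, R z = x₀ + (x₀ - z) := by
    intro z
    show AffineMap.homothety x₀ (-1 : ℝ) z = _
    rw [AffineMap.homothety_apply]
    simp only [vsub_eq_sub, vadd_eq_add]
    module
  have hRB : ∀ z ∈ B, R z ∈ B := by
    intro z hz
    rw [hB, Metric.mem_closedBall, dist_eq_norm] at hz ⊢
    rw [hRz]
    have h1 : x₀ + (x₀ - z) - x₀ = x₀ - z := by abel
    rw [h1, norm_sub_rev]
    exact hz
  have hRimg : volume (R '' Bad) = volume Bad := by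
    have h1 : R '' Bad = (AffineMap.homothety x₀ (-1 : ℝ)) '' Bad := rfl
    rw [h1, Measure.addHaar_image_homothety]
    simp [abs_pow]
  have hRR : ∀ z, R (R z) = z := by intro z; rw [hRz, hRz]; abel
  have hexists : ∃ z, z ∈ B ∧ z ∉ Bad ∪ R '' Bad := by
    by_contra hcon
    push_neg at hcon
    have hsub : B ⊆ Bad ∪ R '' Bad := fun z hz => hcon z hz
    have h1 : volume B ≤ volume Bad + volume (R '' Bad) :=
      le_trans (measure_mono hsub) (measure_union_le _ _)
    rw [hRimg] at h1
    have h2 : (volume B).toReal ≤ (volume Bad).toReal + (volume Bad).toReal := by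
      have h3 := ENNReal.toReal_mono
        (ENNReal.add_lt_top.2 ⟨hBadfin.lt_top, hBadfin.lt_top⟩).ne h1
      rwa [ENNReal.toReal_add hBadfin hBadfin] at h3
    linarith
  obtain ⟨z, hzB, hzn⟩ := hexists
  obtain ⟨hz1, hz2, hz3⟩ := hGoodpt z ⟨hzB, fun h => hzn (Or.inl h)⟩
  have hRzB : R z ∈ B := hRB z hzB
  have hRznotbad : R z ∉ Bad := fun h => hzn (Or.inr ⟨R z, h, hRR z⟩)
  obtain ⟨hR1, hR2, hR3⟩ := hGoodpt (R z) ⟨hRzB, hRznotbad⟩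
  have hmid : (2⁻¹ : ℝ) • z + (2⁻¹ : ℝ) • R z = x₀ := by rw [hRz]; module
  have hupper : u k x₀ < ((A + ε : ℝ) : EReal) := by
    have h1 := epi_le (hu k).1.2.2.2.1 (EReal.coe_toReal hz1 ((hu k).1.1 z)).symm.le
      (EReal.coe_toReal hR1 ((hu k).1.1 (R z))).symm.le (by norm_num : (0:ℝ) ≤ 2⁻¹)
      (by norm_num : (0:ℝ) ≤ 2⁻¹) (by norm_num)
    rw [hmid] at h1
    refine lt_of_le_of_lt h1 ?_
    rw [EReal.coe_lt_coe_iff]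
    linarith
  have hlower : ((A - ε : ℝ) : EReal) < u k x₀ := by
    by_contra hcon
    push_neg at hcon
    set W : Set (En n) := B ∩ {x | c5 ≤ |zeval ζ (u k x) - zeval ζ (v x)|} with hWdef
    have hWmeas : MeasurableSet W :=
      hBmeas.inter (measurableSet_le measurable_const (hgmeas k))
    have hWsub : W ⊆ B := Set.inter_subset_left
    have hWfin : volume W ≠ ⊤ := (lt_of_le_of_lt (measure_mono hWsub) hBfin.lt_top).ne
    set T : En n → En n := fun z => AffineMap.homothety x₀ (2⁻¹ : ℝ) z with hTdef
    have hTz : ∀ z, T z = (2⁻¹ : ℝ) • x₀ + (2⁻¹ : ℝ) • z := by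
      intro z
      show AffineMap.homothety x₀ (2⁻¹ : ℝ) z = _
      rw [AffineMap.homothety_apply]
      simp only [vsub_eq_sub, vadd_eq_add]
      module
    have hTB : ∀ z ∈ B, T z ∈ B := by
      intro z hz
      rw [hB, Metric.mem_closedBall, dist_eq_norm] at hz ⊢
      have h1 : T z - x₀ = (2⁻¹ : ℝ) • (z - x₀) := by rw [hTz]; module
      rw [h1, norm_smul, Real.norm_eq_abs, abs_of_pos (by norm_num : (0:ℝ) < (2⁻¹:ℝ))]
      nlinarith [norm_nonneg (z - x₀)]
    have hTW : T '' (B \ Bad) ⊆ W := by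
      rintro _ ⟨w, hw, rfl⟩
      obtain ⟨hw1, hw2, hw3⟩ := hGoodpt w hw
      have hmB : T w ∈ B := hTB w hw.1
      refine ⟨hmB, ?_⟩
      have h1 := epi_le (hu k).1.2.2.2.1 hcon
        (EReal.coe_toReal hw1 ((hu k).1.1 w)).symm.le (by norm_num : (0:ℝ) ≤ 2⁻¹)
        (by norm_num : (0:ℝ) ≤ 2⁻¹) (by norm_num)
      rw [← hTz w] at h1
      have hne : u k (T w) ≠ ⊤ := by
        intro h; rw [h] at h1; exact EReal.coe_ne_top _ (top_le_iff.1 h1)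
      have htr : (u k (T w)).toReal ≤ 2⁻¹ * (A - ε) + 2⁻¹ * (u k w).toReal := by
        have h2 := EReal.toReal_le_toReal h1 ((hu k).1.1 _) (EReal.coe_ne_top _)
        rwa [EReal.toReal_coe] at h2
      have htr2 : (u k (T w)).toReal < A - ε/4 := by linarith
      have hfm : A - ε/8 ≤ f (T w) := by
        obtain ⟨h1', h2'⟩ := abs_sub_le_iff.1 (hBf (T w) hmB)
        linarith
      have hz1' : ζ (f (T w)) ≤ ζ (A - ε/8) := hζanti.antitone (by linarith)
      have hz2' : ζ (A - ε/4) ≤ ζ ((u k (T w)).toReal) := hζanti.antitone (by linarith)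
      show c5 ≤ |zeval ζ (u k (T w)) - zeval ζ (v (T w))|
      calc c5 = ζ (A - ε/4) - ζ (A - ε/8) := hc5def
        _ ≤ ζ ((u k (T w)).toReal) - ζ (f (T w)) := by linarith
        _ ≤ |ζ ((u k (T w)).toReal) - ζ (f (T w))| := le_abs_self _
        _ = |zeval ζ (u k (T w)) - zeval ζ (v (T w))| := by
            rw [zeval_coe hne, hzv (T w) hmB]
    have himg : volume (T '' (B \ Bad))
        = ENNReal.ofReal ((2⁻¹ : ℝ) ^ n) * volume (B \ Bad) := by
      have h1 : T '' (B \ Bad) = (AffineMap.homothety x₀ (2⁻¹ : ℝ)) '' (B \ Bad) := rfl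
      rw [h1, Measure.addHaar_image_homothety]
      congr 2
      rw [finrank_euclideanSpace_fin, abs_of_pos (by positivity)]
    have hdiffR : (volume (B \ Bad)).toReal = (volume B).toReal - (volume Bad).toReal := by
      rw [measure_diff hBadsub hBadmeas.nullMeasurableSet hBadfin,
        ENNReal.toReal_sub_of_le (measure_mono hBadsub) hBfin]
    have hWlow : (2⁻¹:ℝ) ^ n * ((volume B).toReal / 2) ≤ (volume W).toReal := by
      have h1 : volume (T '' (B \ Bad)) ≤ volume W := measure_mono hTW
      have h2 := ENNReal.toReal_mono hWfin h1
      rw [himg, ENNReal.toReal_mul, ENNReal.toReal_ofReal (by positivity)] at h2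
      have h3 : (volume B).toReal / 2 ≤ (volume (B \ Bad)).toReal := by
        rw [hdiffR]; linarith
      have h4 : (2⁻¹:ℝ) ^ n * ((volume B).toReal / 2)
          ≤ (2⁻¹:ℝ) ^ n * (volume (B \ Bad)).toReal :=
        mul_le_mul_of_nonneg_left h3 (by positivity)
      linarith
    have hWup : c5 ^ p * (volume W).toReal ≤ ∫ x, |zeval ζ (u k x) - zeval ζ (v x)| ^ p :=
      cheb (hFint k) (hFnn k) hWmeas hWfin
        (fun x hx => Real.rpow_le_rpow hc5.le hx.2 (by linarith))
    have hfinal : c5 ^ p * ((2⁻¹:ℝ) ^ n * ((volume B).toReal / 2))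
        < c5 ^ p * ((2⁻¹:ℝ) ^ n * ((volume B).toReal / 2)) :=
      calc c5 ^ p * ((2⁻¹:ℝ) ^ n * ((volume B).toReal / 2))
          ≤ c5 ^ p * (volume W).toReal := mul_le_mul_of_nonneg_left hWlow hd5pos.le
        _ ≤ ∫ x, |zeval ζ (u k x) - zeval ζ (v x)| ^ p := hWup
        _ < θ := hk
        _ ≤ c5 ^ p * ((2⁻¹:ℝ) ^ n * ((volume B).toReal / 2)) := hθ2
    exact absurd hfinal (lt_irrefl _)
  exact ⟨hlower, hupper⟩
end
end

section
/- (Selection theorem) Let u_k ∈ Conv_c(ℝⁿ) be a sequence. If there exist a > 0 and b, m ∈ ℝ such that min_{x∈ℝⁿ} u_k(x) ≤ m and u_k(x) ≥ a|x| + b for every x ∈ ℝⁿ and every k ∈ ℕ, then there exists a subsequence u_{k_j} that epi-converges to a function u ∈ Conv_c(ℝⁿ). If furthermore for every a > 0 there exists b ∈ ℝ (possibly depending on a) such that u_k(x) ≥ a|x| + b for all x ∈ ℝⁿ and all k, then the limit u is super-coercive, i.e., u ∈ Conv_s(ℝⁿ). -/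
open MeasureTheory Filter Topology Set
open scoped Classical ENNReal

noncomputable section

namespace Sel

/-- Diagonal extraction. -/
lemma diagonal_tendsto {X : Type*} [TopologicalSpace X]
    (hX : ∀ y : ℕ → X, ∃ L, ∃ σ : ℕ → ℕ, StrictMono σ ∧ Tendsto (y ∘ σ) atTop (𝓝 L))
    (F : ℕ → ℕ → X) :
    ∃ φ : ℕ → ℕ, StrictMono φ ∧ ∀ i, ∃ L, Tendsto (fun j => F i (φ j)) atTop (𝓝 L) := by
  classical
  let pick : ℕ → (ℕ → ℕ) → (ℕ → ℕ) := fun i c =>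
    (hX fun j => F i (c j)).choose_spec.choose
  have pick_mono : ∀ i c, StrictMono (pick i c) := fun i c =>
    (hX fun j => F i (c j)).choose_spec.choose_spec.1
  have pick_tendsto : ∀ i c, Tendsto ((fun j => F i (c j)) ∘ pick i c) atTop
      (𝓝 (hX fun j => F i (c j)).choose) := fun i c =>
    (hX fun j => F i (c j)).choose_spec.choose_spec.2
  let C : ℕ → (ℕ → ℕ) := fun i => Nat.rec id (fun i c => c ∘ pick i c) i
  have hCsucc : ∀ i, C (i + 1) = C i ∘ pick i (C i) := fun i => rfl
  have hCmono : ∀ i, StrictMono (C i) := by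
    intro i; induction i with
    | zero => exact strictMono_id
    | succ i ih => exact ih.comp (pick_mono i (C i))
  have hfactor : ∀ i k, ∃ τ : ℕ → ℕ, StrictMono τ ∧ C (i + k) = C i ∘ τ := by
    intro i k
    induction k with
    | zero => exact ⟨id, strictMono_id, rfl⟩
    | succ k ih =>
      obtain ⟨τ, hτ, heq⟩ := ih
      refine ⟨τ ∘ pick (i + k) (C (i + k)), hτ.comp (pick_mono _ _), ?_⟩
      rw [show i + (k+1) = (i+k) + 1 from rfl, hCsucc (i + k), heq]; rfl
  refine ⟨fun j => C (j + 1) j, ?_, ?_⟩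
  · have key : ∀ j : ℕ, C (j + 1) j < C (j + 2) (j + 1) := by
      intro j
      have h1 : C (j + 1) j < C (j + 1) (j + 1) := hCmono (j + 1) (Nat.lt_succ_self j)
      have h2 : C (j + 1) (j + 1) ≤ C (j + 2) (j + 1) := by
        rw [hCsucc (j + 1)]
        exact (hCmono (j + 1)).monotone ((pick_mono (j + 1) (C (j + 1))).le_apply)
      exact lt_of_lt_of_le h1 h2
    exact strictMono_nat_of_lt_succ key
  · intro i
    refine ⟨(hX fun j => F i (C i j)).choose, ?_⟩
    have tail : ∀ j : ℕ, i ≤ j → ∃ t : ℕ, C (i + 1) t = C (j + 1) j ∧ j ≤ t := by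
      intro j hij
      obtain ⟨k, hk⟩ := Nat.exists_eq_add_of_le hij
      obtain ⟨τ, hτ, heq⟩ := hfactor (i + 1) k
      have h : (i + 1) + k = j + 1 := by omega
      rw [h] at heq
      exact ⟨τ j, by rw [heq]; rfl, hτ.le_apply⟩
    set r : ℕ → ℕ := fun j => if h : i ≤ j then (tail j h).choose else j with hr
    have hrge : ∀ j, j ≤ r j := by
      intro j; by_cases h : i ≤ j
      · simp only [hr, dif_pos h]; exact (tail j h).choose_spec.2
      · simp [hr, dif_neg h]
    have hrtop : Tendsto r atTop atTop := tendsto_atTop_mono hrge tendsto_id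
    have hgr : Tendsto (fun j => F i (C (i + 1) (r j))) atTop
        (𝓝 (hX fun j => F i (C i j)).choose) := (pick_tendsto i (C i)).comp hrtop
    refine hgr.congr' ?_
    filter_upwards [eventually_ge_atTop i] with j hj
    simp only [hr, dif_pos hj]
    rw [(tail j hj).choose_spec.1]

/-- Every EReal sequence has a convergent subsequence. -/
lemma ereal_subseq (y : ℕ → EReal) :
    ∃ L, ∃ σ : ℕ → ℕ, StrictMono σ ∧ Tendsto (y ∘ σ) atTop (𝓝 L) := by
  obtain ⟨L, _, σ, hσ, ht⟩ :=
    (isCompact_univ (X := EReal)).tendsto_subseq (fun n => Set.mem_univ (y n))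
  exact ⟨L, σ, hσ, ht⟩

lemma ereal_le_coe_of_forall_add {x : EReal} {y : ℝ}
    (h : ∀ ε : ℝ, 0 < ε → x ≤ ((y + ε : ℝ) : EReal)) : x ≤ (y : EReal) := by
  by_contra hxy
  push_neg at hxy
  obtain ⟨d, hyd, hdx⟩ := exists_between hxy
  have hd1 : d ≠ ⊤ := (hdx.trans_le le_top).ne
  have hd0 : d ≠ ⊥ := (lt_of_le_of_lt bot_le hyd).ne'
  lift d to ℝ using ⟨hd1, hd0⟩
  have hε : (0:ℝ) < d - y := sub_pos.mpr (EReal.coe_lt_coe_iff.mp hyd)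
  have h2 := h (d - y) hε
  rw [show y + (d - y) = d by ring] at h2
  exact absurd (h2.trans_lt hdx) (lt_irrefl _)

/-- The lower epi-limit. -/
def lowEpi (n : ℕ) (w : ℕ → En n → EReal) (x : En n) : EReal :=
  ⨆ m : ℕ, Filter.liminf (fun j => ⨅ y ∈ Metric.ball x ((1:ℝ)/(m+1)), w j y) Filter.atTop

lemma radius_pos (m : ℕ) : (0:ℝ) < 1/((m:ℝ)+1) := by positivity

lemma radius_half (m : ℕ) : (1:ℝ)/(((2*m+1 : ℕ):ℝ)+1) = ((1:ℝ)/((m:ℝ)+1))/2 := by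
  push_cast; rw [div_div]; congr 1; ring

/-- The liminf inequality. -/
lemma lowEpi_le_liminf {n : ℕ} (w : ℕ → En n → EReal) (x : En n) (y : ℕ → En n)
    (hy : Tendsto y atTop (𝓝 x)) :
    lowEpi n w x ≤ liminf (fun j => w j (y j)) atTop := by
  refine iSup_le fun m => ?_
  refine liminf_le_liminf ?_
  have hball : ∀ᶠ j in atTop, y j ∈ Metric.ball x ((1:ℝ)/(m+1)) :=
    hy (Metric.ball_mem_nhds x (radius_pos m))
  filter_upwards [hball] with j hj
  exact biInf_le _ hj

/-- Lower semicontinuity. -/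
lemma lowEpi_lsc {n : ℕ} (w : ℕ → En n → EReal) : LowerSemicontinuous (lowEpi n w) := by
  intro x c hc
  obtain ⟨m, hm⟩ := lt_iSup_iff.mp hc
  filter_upwards [Metric.ball_mem_nhds x (radius_pos (2*m+1))] with x' hx'
  refine lt_of_lt_of_le hm (le_trans ?_ (le_iSup _ (2*m+1)))
  refine liminf_le_liminf (Eventually.of_forall fun j => biInf_mono ?_)
  intro z hz
  rw [Metric.mem_ball] at hz hx' ⊢
  rw [radius_half] at hz hx'
  calc dist z x ≤ dist z x' + dist x' x := dist_triangle z x' x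
    _ < (1:ℝ)/((m:ℝ)+1)/2 + (1:ℝ)/((m:ℝ)+1)/2 := by exact add_lt_add hz hx'
    _ = (1:ℝ)/((m:ℝ)+1) := by ring

/-- Cone lower bound passes to the lower epi-limit. -/
lemma lowEpi_cone {n : ℕ} (w : ℕ → En n → EReal) (a b : ℝ) (ha : 0 ≤ a)
    (hw : ∀ j x, ((a * ‖x‖ + b : ℝ) : EReal) ≤ w j x) (x : En n) :
    ((a * ‖x‖ + b : ℝ) : EReal) ≤ lowEpi n w x := by
  have key : ∀ m : ℕ, ((a * (‖x‖ - 1/((m:ℝ)+1)) + b : ℝ) : EReal) ≤ lowEpi n w x := by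
    intro m
    refine le_trans ?_ (le_iSup _ m)
    refine le_liminf_of_le (by isBoundedDefault) (Eventually.of_forall fun j => ?_)
    refine le_iInf₂ fun z hz => ?_
    refine le_trans ?_ (hw j z)
    rw [EReal.coe_le_coe_iff]
    have h1 : ‖x‖ - ‖z‖ ≤ dist z x := by
      rw [dist_comm, dist_eq_norm]; exact norm_sub_norm_le x z
    rw [Metric.mem_ball] at hz
    nlinarith [norm_nonneg z]
  have htend : Tendsto (fun m : ℕ => ((a * (‖x‖ - 1/((m:ℝ)+1)) + b : ℝ) : EReal)) atTop
      (𝓝 ((a * ‖x‖ + b : ℝ) : EReal)) := by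
    apply (continuous_coe_real_ereal.continuousAt).tendsto.comp
    have : Tendsto (fun m : ℕ => a * (‖x‖ - 1/((m:ℝ)+1)) + b) atTop (𝓝 (a * (‖x‖ - 0) + b)) := by
      exact (((tendsto_const_nhds).sub tendsto_one_div_add_atTop_nhds_zero_nat).const_mul a).add tendsto_const_nhds
    simpa using this
  exact le_of_tendsto htend (Eventually.of_forall key)

/-- Key consequence of the diagonal extraction: the upper epi-limit is below the lower one. -/
lemma limsup_le_lowEpi {n : ℕ} (w : ℕ → En n → EReal)
    (hconv : ∀ (x : En n) (r : ℝ), 0 < r → ∃ (c : En n) (m' : ℕ),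
      dist c x < (1:ℝ)/((m':ℝ)+1)/2 ∧ (1:ℝ)/((m':ℝ)+1) ≤ r/2 ∧
      ∃ L, Tendsto (fun j => ⨅ y ∈ Metric.ball c ((1:ℝ)/((m':ℝ)+1)), w j y) atTop (𝓝 L))
    (x : En n) (m : ℕ) :
    limsup (fun j => ⨅ y ∈ Metric.ball x ((1:ℝ)/((m:ℝ)+1)), w j y) atTop ≤ lowEpi n w x := by
  set r : ℝ := (1:ℝ)/((m:ℝ)+1) with hrdef
  obtain ⟨c, m', hdist, hrad, L, hL⟩ := hconv x r (radius_pos m)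
  set s : ℝ := (1:ℝ)/((m':ℝ)+1) with hsdef
  have hs : 0 < s := radius_pos m'
  have hsub1 : Metric.ball c s ⊆ Metric.ball x r := by
    intro z hz
    rw [Metric.mem_ball] at hz ⊢
    calc dist z x ≤ dist z c + dist c x := dist_triangle z c x
      _ < s + s/2 := add_lt_add hz hdist
      _ ≤ r := by linarith
  have hsub2 : Metric.ball x ((1:ℝ)/(((2*m'+1:ℕ):ℝ)+1)) ⊆ Metric.ball c s := by
    intro z hz
    rw [Metric.mem_ball, radius_half] at hz
    rw [Metric.mem_ball]
    calc dist z c ≤ dist z x + dist x c := dist_triangle z x c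
      _ < s/2 + s/2 := add_lt_add hz (by rwa [dist_comm])
      _ = s := by ring
  calc limsup (fun j => ⨅ y ∈ Metric.ball x r, w j y) atTop
      ≤ limsup (fun j => ⨅ y ∈ Metric.ball c s, w j y) atTop :=
        limsup_le_limsup (Eventually.of_forall fun j => biInf_mono hsub1)
    _ = L := hL.limsup_eq
    _ = liminf (fun j => ⨅ y ∈ Metric.ball c s, w j y) atTop := hL.liminf_eq.symm
    _ ≤ liminf (fun j => ⨅ y ∈ Metric.ball x ((1:ℝ)/(((2*m'+1:ℕ):ℝ)+1)), w j y) atTop :=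
        liminf_le_liminf (Eventually.of_forall fun j => biInf_mono hsub2)
    _ ≤ lowEpi n w x := by
        rw [lowEpi]
        exact le_iSup (fun m'' : ℕ => liminf (fun j => ⨅ y ∈ Metric.ball x ((1:ℝ)/((m'':ℝ)+1)), w j y) atTop) (2*m'+1)


/-- Recovery sequences exist. -/
lemma exists_recovery {n : ℕ} (w : ℕ → En n → EReal)
    (hK : ∀ (x : En n) (m : ℕ),
      limsup (fun j => ⨅ y ∈ Metric.ball x ((1:ℝ)/((m:ℝ)+1)), w j y) atTop ≤ lowEpi n w x)
    (hbot : ∀ x, lowEpi n w x ≠ ⊥) (x : En n) :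
    ∃ y : ℕ → En n, Tendsto y atTop (𝓝 x) ∧
      limsup (fun j => w j (y j)) atTop ≤ lowEpi n w x := by
  classical
  by_cases htop : lowEpi n w x = ⊤
  · exact ⟨fun _ => x, tendsto_const_nhds, by rw [htop]; exact le_top⟩
  set t : ℝ := (lowEpi n w x).toReal with ht
  have hvx : lowEpi n w x = (t : EReal) := (EReal.coe_toReal htop (hbot x)).symm
  have hP : ∀ m : ℕ, ∀ᶠ j in atTop,
      ∃ z, dist z x < (1:ℝ)/((m:ℝ)+1) ∧ w j z < ((t + 1/((m:ℝ)+1) : ℝ) : EReal) := by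
    intro m
    have h1 : limsup (fun j => ⨅ y ∈ Metric.ball x ((1:ℝ)/((m:ℝ)+1)), w j y) atTop
        < ((t + 1/((m:ℝ)+1) : ℝ) : EReal) := by
      refine lt_of_le_of_lt ((hK x m).trans_eq hvx) ?_
      exact_mod_cast lt_add_of_pos_right t (radius_pos m)
    filter_upwards [eventually_lt_of_limsup_lt h1] with j hj
    obtain ⟨z, hz⟩ := iInf_lt_iff.mp hj
    obtain ⟨hzS, hlt⟩ := iInf_lt_iff.mp hz
    exact ⟨z, Metric.mem_ball.mp hzS, hlt⟩
  choose N hN using fun m => eventually_atTop.mp (hP m)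
  set M : ℕ → ℕ := fun m => Nat.rec (N 0) (fun m' p => max (N (m'+1)) (p+1)) m with hM
  have hM1 : ∀ m, N m ≤ M m := by
    intro m; cases m with
    | zero => exact le_rfl
    | succ m' => exact le_max_left _ _
  have hMsucc : ∀ m, M m < M (m+1) := by
    intro m
    have : M m + 1 ≤ M (m+1) := le_max_right _ _
    omega
  have hM2 : StrictMono M := strictMono_nat_of_lt_succ hMsucc
  set mj : ℕ → ℕ := fun j => Nat.findGreatest (fun m => M m ≤ j) j with hmj
  have hmj_top : Tendsto mj atTop atTop := by
    refine tendsto_atTop.mpr fun m => ?_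
    filter_upwards [eventually_ge_atTop (max m (M m))] with j hj
    exact Nat.le_findGreatest (le_trans (le_max_left _ _) hj) (le_trans (le_max_right _ _) hj)
  have hmj_spec : ∀ j, M 0 ≤ j → M (mj j) ≤ j := fun j hj =>
    Nat.findGreatest_spec (P := fun m => M m ≤ j) (Nat.zero_le j) hj
  have hy : ∀ j, M 0 ≤ j → ∃ z, dist z x < (1:ℝ)/((mj j:ℝ)+1) ∧
      w j z < ((t + 1/((mj j:ℝ)+1) : ℝ) : EReal) := fun j hj =>
    hN (mj j) j (le_trans (hM1 (mj j)) (hmj_spec j hj))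
  set y : ℕ → En n := fun j => if h : M 0 ≤ j then (hy j h).choose else x with hydef
  have hrad_to : Tendsto (fun j => (1:ℝ)/((mj j:ℝ)+1)) atTop (𝓝 0) :=
    tendsto_one_div_add_atTop_nhds_zero_nat.comp hmj_top
  refine ⟨y, ?_, ?_⟩
  · rw [tendsto_iff_dist_tendsto_zero]
    refine squeeze_zero' (Eventually.of_forall fun j => dist_nonneg) ?_ hrad_to
    filter_upwards [eventually_ge_atTop (M 0)] with j hj
    simp only [hydef, dif_pos hj]
    exact ((hy j hj).choose_spec.1).le
  · rw [hvx]
    have hcoe : Tendsto (fun j => ((t + 1/((mj j:ℝ)+1) : ℝ) : EReal)) atTop (𝓝 (t : EReal)) := by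
      apply (continuous_coe_real_ereal.continuousAt).tendsto.comp
      simpa using (tendsto_const_nhds (x := t)).add hrad_to
    rw [← hcoe.limsup_eq]
    refine limsup_le_limsup ?_
    filter_upwards [eventually_ge_atTop (M 0)] with j hj
    simp only [hydef, dif_pos hj]
    exact ((hy j hj).choose_spec.2).le

/-- Convexity of the epigraph of the lower epi-limit. -/
lemma lowEpi_convex {n : ℕ} (w : ℕ → En n → EReal)
    (hconvex : ∀ j, Convex ℝ (epiSet (w j)))
    (hrec : ∀ x : En n, ∃ y : ℕ → En n, Tendsto y atTop (𝓝 x) ∧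
      limsup (fun j => w j (y j)) atTop ≤ lowEpi n w x) :
    Convex ℝ (epiSet (lowEpi n w)) := by
  rintro ⟨x1, t1⟩ h1 ⟨x2, t2⟩ h2 θ μ hθ hμ hθμ
  simp only [epiSet, Set.mem_setOf_eq] at h1 h2 ⊢
  simp only [Prod.fst_add, Prod.snd_add, Prod.smul_fst, Prod.smul_snd, smul_eq_mul]
  rcases eq_or_lt_of_le hθ with hθ0 | hθpos
  · have hμ1 : μ = 1 := by linarith
    subst hμ1
    simp only [← hθ0, zero_smul, zero_add, zero_mul, one_smul, one_mul]
    exact h2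
  rcases eq_or_lt_of_le hμ with hμ0 | hμpos
  · have hθ1 : θ = 1 := by linarith
    subst hθ1
    simp only [← hμ0, zero_smul, add_zero, zero_mul, one_smul, one_mul]
    exact h1
  obtain ⟨y, hy, hly⟩ := hrec x1
  obtain ⟨z, hz, hlz⟩ := hrec x2
  have hwb : Tendsto (fun j => θ • y j + μ • z j) atTop (𝓝 (θ • x1 + μ • x2)) :=
    ((hy.const_smul θ).add (hz.const_smul μ))
  have hmain := lowEpi_le_liminf w _ _ hwb
  refine ereal_le_coe_of_forall_add fun ε hε => ?_
  have e1 : ∀ᶠ j in atTop, w j (y j) < ((t1 + ε : ℝ) : EReal) := by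
    refine eventually_lt_of_limsup_lt (lt_of_le_of_lt (hly.trans h1) ?_)
    exact_mod_cast lt_add_of_pos_right t1 hε
  have e2 : ∀ᶠ j in atTop, w j (z j) < ((t2 + ε : ℝ) : EReal) := by
    refine eventually_lt_of_limsup_lt (lt_of_le_of_lt (hlz.trans h2) ?_)
    exact_mod_cast lt_add_of_pos_right t2 hε
  have e3 : ∀ᶠ j in atTop,
      w j (θ • y j + μ • z j) ≤ ((θ * (t1 + ε) + μ * (t2 + ε) : ℝ) : EReal) := by
    filter_upwards [e1, e2] with j hj1 hj2
    have m1 : (y j, t1 + ε) ∈ epiSet (w j) := hj1.le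
    have m2 : (z j, t2 + ε) ∈ epiSet (w j) := hj2.le
    have hmem := hconvex j m1 m2 hθ hμ hθμ
    simpa only [epiSet, Set.mem_setOf_eq, Prod.fst_add, Prod.snd_add, Prod.smul_fst,
      Prod.smul_snd, smul_eq_mul] using hmem
  have hlim : liminf (fun j => w j (θ • y j + μ • z j)) atTop
      ≤ ((θ * (t1 + ε) + μ * (t2 + ε) : ℝ) : EReal) := by
    calc liminf (fun j => w j (θ • y j + μ • z j)) atTop
        ≤ liminf (fun _ => ((θ * (t1 + ε) + μ * (t2 + ε) : ℝ) : EReal)) atTop :=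
          liminf_le_liminf e3
      _ = _ := liminf_const _
  have harith : θ * (t1 + ε) + μ * (t2 + ε) = θ * t1 + μ * t2 + ε := by
    have : θ + μ = 1 := hθμ
    nlinarith [this]
  rw [harith] at hlim
  exact (hmain.trans hlim)

end Sel

theorem statement5 (n : ℕ) (u : ℕ → En n → EReal) (hu : ∀ k, ConvC n (u k))
    (a : ℝ) (ha : 0 < a) (b m : ℝ)
    (hmin : ∀ k, ∃ x, u k x ≤ (m : EReal))
    (hcone : ∀ k, ∀ x, ((a * ‖x‖ + b : ℝ) : EReal) ≤ u k x) :
    ∃ φ : ℕ → ℕ, StrictMono φ ∧ ∃ v : En n → EReal, ConvC n v ∧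
      EpiTendsto (fun j => u (φ j)) v ∧
      ((∀ a' : ℝ, 0 < a' → ∃ b' : ℝ, ∀ k, ∀ x, ((a' * ‖x‖ + b' : ℝ) : EReal) ≤ u k x) →
        SuperCoercive v) := by
  classical
  -- a subsequence along which near-minimizers converge
  choose xs hxs using hmin
  have hxsball : ∀ k, xs k ∈ Metric.closedBall (0 : En n) ((m - b)/a) := by
    intro k
    have h1 : ((a * ‖xs k‖ + b : ℝ) : EReal) ≤ (m : EReal) := (hcone k (xs k)).trans (hxs k)
    have h2 : a * ‖xs k‖ + b ≤ m := EReal.coe_le_coe_iff.mp h1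
    rw [Metric.mem_closedBall, dist_zero_right, le_div_iff₀ ha]
    linarith
  obtain ⟨x₀, hx₀mem, ψ, hψ, hψt⟩ :=
    (isCompact_closedBall (0 : En n) _).tendsto_subseq hxsball
  -- dense sequence and diagonal extraction
  set D : ℕ → En n := TopologicalSpace.denseSeq (En n) with hD
  have hDd : DenseRange D := TopologicalSpace.denseRange_denseSeq _
  obtain ⟨φ', hφ', hφ'conv⟩ := Sel.diagonal_tendsto Sel.ereal_subseq
    (fun i j => ⨅ y ∈ Metric.ball (D i.unpair.1) ((1:ℝ)/((i.unpair.2 : ℝ)+1)), u (ψ j) y)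
  set φ : ℕ → ℕ := ψ ∘ φ' with hφdef
  have hφ : StrictMono φ := hψ.comp hφ'
  set w : ℕ → En n → EReal := fun j => u (φ j) with hw
  set v := Sel.lowEpi n w with hv
  have hconv : ∀ (x : En n) (r : ℝ), 0 < r → ∃ (c : En n) (m' : ℕ),
      dist c x < (1:ℝ)/((m':ℝ)+1)/2 ∧ (1:ℝ)/((m':ℝ)+1) ≤ r/2 ∧
      ∃ L, Tendsto (fun j => ⨅ y ∈ Metric.ball c ((1:ℝ)/((m':ℝ)+1)), w j y) atTop (𝓝 L) := by
    intro x r hr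
    obtain ⟨m', hm'⟩ := exists_nat_one_div_lt (by positivity : (0:ℝ) < r/2)
    obtain ⟨i, hi⟩ := Metric.denseRange_iff.mp hDd x ((1:ℝ)/((m':ℝ)+1)/2)
      (by positivity)
    refine ⟨D i, m', by rwa [dist_comm], hm'.le, ?_⟩
    obtain ⟨L, hL⟩ := hφ'conv (Nat.pair i m')
    refine ⟨L, ?_⟩
    simp only [Nat.unpair_pair] at hL
    exact hL
  have hK : ∀ (x : En n) (m' : ℕ),
      limsup (fun j => ⨅ y ∈ Metric.ball x ((1:ℝ)/((m':ℝ)+1)), w j y) atTop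
        ≤ Sel.lowEpi n w x := fun x m' => Sel.limsup_le_lowEpi w hconv x m'
  have hwcone : ∀ j x, ((a * ‖x‖ + b : ℝ) : EReal) ≤ w j x := fun j x => hcone (φ j) x
  have hvcone : ∀ x, ((a * ‖x‖ + b : ℝ) : EReal) ≤ v x :=
    fun x => Sel.lowEpi_cone w a b ha.le hwcone x
  have hbot : ∀ x, v x ≠ ⊥ := fun x => ((EReal.bot_lt_coe _).trans_le (hvcone x)).ne'
  have hrec := Sel.exists_recovery w hK hbot
  have hprop : v x₀ ≤ (m : EReal) := by
    have hyconv : Tendsto (fun j => xs (φ j)) atTop (𝓝 x₀) :=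
      hψt.comp hφ'.tendsto_atTop
    refine le_trans (Sel.lowEpi_le_liminf w x₀ _ hyconv) ?_
    calc liminf (fun j => w j (xs (φ j))) atTop ≤ liminf (fun _ => (m : EReal)) atTop :=
        liminf_le_liminf (Eventually.of_forall fun j => hxs (φ j))
      _ = (m : EReal) := liminf_const _
  refine ⟨φ, hφ, v, ?_, ?_, ?_⟩
  · refine ⟨hbot, ⟨x₀, (hprop.trans_lt (EReal.coe_lt_top m)).ne⟩, Sel.lowEpi_lsc w,
      Sel.lowEpi_convex w (fun j => (hu (φ j)).2.2.2.1) hrec, ?_⟩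
    rw [EReal.tendsto_nhds_top_iff_real]
    intro c
    rw [← Metric.cobounded_eq_cocompact]
    have hev : ∀ᶠ x : En n in Bornology.cobounded _, (c - b)/a < ‖x‖ :=
      tendsto_norm_cobounded_atTop.eventually (eventually_gt_atTop _)
    filter_upwards [hev] with x hx
    refine lt_of_lt_of_le ?_ (hvcone x)
    rw [EReal.coe_lt_coe_iff]
    rw [div_lt_iff₀ ha] at hx
    linarith
  · intro x
    exact ⟨fun y hy => Sel.lowEpi_le_liminf w x y hy, hrec x⟩
  · intro h2 M
    obtain ⟨b', hb'⟩ := h2 (|M| + 1) (by positivity)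
    have hv' : ∀ x, (((|M|+1) * ‖x‖ + b' : ℝ) : EReal) ≤ v x :=
      fun x => Sel.lowEpi_cone w _ b' (by positivity) (fun j x => hb' (φ j) x) x
    rw [← Metric.cobounded_eq_cocompact]
    have hev : ∀ᶠ x : En n in Bornology.cobounded _, |b'| < ‖x‖ :=
      tendsto_norm_cobounded_atTop.eventually (eventually_gt_atTop _)
    filter_upwards [hev] with x hx
    refine le_trans ?_ (hv' x)
    rw [EReal.coe_le_coe_iff]
    have h1 : M ≤ |M| := le_abs_self M
    nlinarith [abs_nonneg b', neg_abs_le b', norm_nonneg x]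
end
end

section
/- Let n ≥ 1 and let ζ : ℝ → (0,∞) be continuous and strictly decreasing with ∫₀^∞ ζ(t) t^(n−1) dt < ∞. If u, v ∈ Conv_c^{(n)}(ℝⁿ) are such that epi u ⊆ epi v and ∫_{ℝⁿ} ζ(u(x)) dx = ∫_{ℝⁿ} ζ(v(x)) dx, then u ≡ v. -/
open MeasureTheory Filter Topology Set
open scoped Classical ENNReal

noncomputable section

namespace Stmt8

variable {n : ℕ}

/-- Membership in the epigraph. -/
lemma mem_epi {u : En n → EReal} {x : En n} {t : ℝ} :
    (x, t) ∈ epiSet u ↔ u x ≤ (t : EReal) := Iff.rfl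

/-- `epi u ⊆ epi v` implies `v ≤ u`. -/
lemma le_of_epi_subset {u v : En n → EReal} (hu : ∀ x, u x ≠ ⊥)
    (hsub : epiSet u ⊆ epiSet v) (x : En n) : v x ≤ u x := by
  by_cases hx : u x = ⊤
  · simp [hx]
  · have h1 : u x ≤ ((u x).toReal : EReal) := le_of_eq (EReal.coe_toReal hx (hu x)).symm
    have := hsub (mem_epi.2 h1)
    rw [mem_epi] at this
    calc v x ≤ ((u x).toReal : EReal) := this
    _ = u x := EReal.coe_toReal hx (hu x)

/-- Convexity inequality from convexity of the epigraph. -/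
lemma convex_comb {u : En n → EReal} (hc : Convex ℝ (epiSet u)) {a b : En n} {s t : ℝ}
    (ha : u a ≤ (s : EReal)) (hb : u b ≤ (t : EReal)) {θ : ℝ} (h0 : 0 ≤ θ) (h1 : θ ≤ 1) :
    u (θ • a + (1 - θ) • b) ≤ ((θ * s + (1 - θ) * t : ℝ) : EReal) := by
  have := hc (mem_epi.2 ha) (mem_epi.2 hb) h0 (by linarith : (0:ℝ) ≤ 1 - θ) (by ring)
  simpa [epiSet, Prod.smul_mk, smul_eq_mul, Set.mem_setOf_eq] using this

lemma zeval_nonneg {ζ : ℝ → ℝ} (hζpos : ∀ t, 0 < ζ t) (t : EReal) : 0 ≤ zeval ζ t := by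
  unfold zeval; split
  · exact le_refl 0
  · exact (hζpos _).le

/-- Monotonicity of `zeval` under the pointwise order. -/
lemma zeval_le {ζ : ℝ → ℝ} (hζpos : ∀ t, 0 < ζ t) (hζanti : StrictAnti ζ)
    {s t : EReal} (hbot : s ≠ ⊥) (h : s ≤ t) : zeval ζ t ≤ zeval ζ s := by
  unfold zeval
  by_cases ht : t = ⊤
  · simp only [ht, if_pos]
    split
    · exact le_refl 0
    · exact (hζpos _).le
  · have hs : s ≠ ⊤ := fun hs => ht (top_le_iff.1 (hs ▸ h))
    simp only [ht, hs, if_neg, if_false]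
    exact (hζanti.antitone (EReal.toReal_le_toReal h hbot ht))

lemma zeval_eq_imp {ζ : ℝ → ℝ} (hζpos : ∀ t, 0 < ζ t) (hζanti : StrictAnti ζ)
    {s t : EReal} (hbot : s ≠ ⊥) (h : s ≤ t) (he : zeval ζ s = zeval ζ t) : s = t := by
  unfold zeval at he
  by_cases ht : t = ⊤
  · by_cases hs : s = ⊤
    · rw [hs, ht]
    · simp [ht, hs] at he
      exact absurd he (ne_of_gt (hζpos _))
  · have hs : s ≠ ⊤ := fun hs => ht (top_le_iff.1 (hs ▸ h))
    simp [ht, hs] at he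
    have := hζanti.injective he
    calc s = ((s).toReal : EReal) := (EReal.coe_toReal hs hbot).symm
    _ = ((t).toReal : EReal) := by rw [this]
    _ = t := EReal.coe_toReal ht (fun hb => hbot (le_bot_iff.1 (hb ▸ h)))


/-- Lower bound on a compact set for a lower semicontinuous `⊥`-free function. -/
lemma exists_lower_bound_on_compact {u : En n → EReal} (hlsc : LowerSemicontinuous u)
    (hbot : ∀ x, u x ≠ ⊥) {C : Set (En n)} (hC : IsCompact C) :
    ∃ m : ℝ, ∀ y ∈ C, (m : EReal) < u y := by
  have hopen : ∀ c : ℝ, IsOpen {y | (c : EReal) < u y} := by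
    intro c
    exact lowerSemicontinuous_iff_isOpen_preimage.1 hlsc (c : EReal)
  have hcover : C ⊆ ⋃ c : ℝ, {y | (c : EReal) < u y} := by
    intro y _
    have : (⊥ : EReal) < u y := bot_lt_iff_ne_bot.2 (hbot y)
    obtain ⟨c, _, hc2⟩ := EReal.lt_iff_exists_real_btwn.1 this
    exact Set.mem_iUnion.2 ⟨c, hc2⟩
  obtain ⟨t, ht⟩ := hC.elim_finite_subcover _ hopen hcover
  by_cases hne : t.Nonempty
  · refine ⟨t.min' hne, fun y hy => ?_⟩
    obtain ⟨c, hct, hcy⟩ := Set.mem_iUnion₂.1 (ht hy)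
    calc ((t.min' hne : ℝ) : EReal) ≤ (c : EReal) := by
          exact_mod_cast EReal.coe_le_coe_iff.2 (t.min'_le c hct)
    _ < u y := hcy
  · refine ⟨0, fun y hy => ?_⟩
    rw [Finset.not_nonempty_iff_eq_empty] at hne
    simp [hne] at ht
    rw [ht] at hy
    exact absurd hy (Set.notMem_empty y)

/-- Linear growth lower bound for coercive convex functions. -/
lemma growth {u : En n → EReal} (hu : ConvCd n u) :
    ∃ (x0 : En n) (a c R : ℝ), 0 < c ∧ 0 < R ∧
      ∀ x, ((a + c * max 0 (‖x - x0‖ - R) : ℝ) : EReal) ≤ u x := by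
  obtain ⟨⟨hbot, ⟨x0, hx0⟩, hlsc, hconv, hcoer⟩, _⟩ := hu
  set t0 : ℝ := (u x0).toReal with ht0
  have hx0t : u x0 ≤ (t0 : EReal) := le_of_eq (EReal.coe_toReal hx0 (hbot x0)).symm
  -- coercivity gives a compact set outside which u > t0 + 1
  have hev : ∀ᶠ y in cocompact (En n), ((t0 + 1 : ℝ) : EReal) < u y :=
    EReal.tendsto_nhds_top_iff_real.1 hcoer (t0 + 1)
  obtain ⟨K, hKc, hK⟩ := (hasBasis_cocompact.eventually_iff).1 hev
  obtain ⟨R0, hR0⟩ := hKc.isBounded.subset_closedBall x0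
  set R : ℝ := max R0 0 + 1 with hR
  have hRpos : (0:ℝ) < R := by positivity
  obtain ⟨m, hm⟩ := exists_lower_bound_on_compact hlsc hbot
    (isCompact_closedBall x0 R)
  set a : ℝ := min m t0 with ha
  refine ⟨x0, a, 1/R, R, by positivity, hRpos, ?_⟩
  -- key claim for real values in the epigraph
  have key : ∀ x : En n, ∀ t : ℝ, u x ≤ (t : EReal) → a + 1/R * max 0 (‖x - x0‖ - R) ≤ t := by
    intro x t ht
    set d : ℝ := ‖x - x0‖ with hd
    by_cases hcase : d ≤ R
    · have h0 : max 0 (d - R) = 0 := max_eq_left (by linarith)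
      have hx : x ∈ Metric.closedBall x0 R := by
        rw [Metric.mem_closedBall, dist_eq_norm]; exact hcase
      have := lt_of_lt_of_le (hm x hx) ht
      have hmt : m < t := by exact_mod_cast this
      rw [h0]
      have : a ≤ m := min_le_left _ _
      linarith
    · push_neg at hcase
      have hdpos : (0:ℝ) < d := lt_trans hRpos hcase
      set lam : ℝ := R / d with hlam
      have hlam0 : 0 < lam := by positivity
      have hlam1 : lam < 1 := (div_lt_one hdpos).2 hcase
      have hcomb := convex_comb hconv ht hx0t (le_of_lt hlam0) (le_of_lt hlam1)
      set y : En n := lam • x + (1 - lam) • x0 with hy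
      have hyx0 : y - x0 = lam • (x - x0) := by
        rw [hy]; module
      have hyn : ‖y - x0‖ = R := by
        rw [hyx0, norm_smul, Real.norm_eq_abs, abs_of_pos hlam0, ← hd, hlam]
        field_simp
      have hynotK : y ∉ K := by
        intro hyK
        have := hR0 hyK
        rw [Metric.mem_closedBall, dist_eq_norm, hyn] at this
        have : R ≤ R0 := this
        rw [hR] at this
        have h1 : R0 ≤ max R0 0 := le_max_left _ _
        linarith
      have hyu : ((t0 + 1 : ℝ) : EReal) < u y := hK hynotK
      have : ((t0 + 1 : ℝ) : EReal) < ((lam * t + (1 - lam) * t0 : ℝ) : EReal) :=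
        lt_of_lt_of_le hyu hcomb
      have hlt : t0 + 1 < lam * t + (1 - lam) * t0 := by exact_mod_cast this
      -- deduce t > t0 + d / R
      have htt0 : 1 < lam * (t - t0) := by nlinarith
      have h2 : d / R < t - t0 := by
        rw [hlam, div_mul_eq_mul_div] at htt0
        have h3 : d < R * (t - t0) := (one_lt_div hdpos).1 htt0
        rw [div_lt_iff₀ hRpos]
        have h4 : (t - t0) * R = R * (t - t0) := mul_comm _ _
        linarith
      have hmax : max 0 (d - R) = d - R := max_eq_right (by linarith)
      rw [hmax]
      have hat0 : a ≤ t0 := min_le_right _ _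
      have : 1/R * (d - R) = d/R - 1 := by field_simp
      rw [this]
      linarith
  intro x
  by_cases hx : u x = ⊤
  · rw [hx]; exact le_top
  · have hc := key x (u x).toReal (le_of_eq (EReal.coe_toReal hx (hbot x)).symm)
    calc ((a + 1/R * max 0 (‖x - x0‖ - R) : ℝ) : EReal)
        ≤ (((u x).toReal : ℝ) : EReal) := EReal.coe_le_coe_iff.2 hc
    _ = u x := EReal.coe_toReal hx (hbot x)


/-- Elementary bound `(r+1)^(k+1) - r^(k+1) ≤ (k+1)(r+1)^k`. -/
lemma pow_succ_sub_le (k : ℕ) : ∀ r : ℝ, 0 ≤ r → (r+1)^(k+1) - r^(k+1) ≤ (k+1 : ℝ) * (r+1)^k := by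
  induction k with
  | zero => intro r _; norm_num
  | succ k ih =>
    intro r hr
    have h2 := ih r hr
    have h6 : r^(k+1) ≤ (r+1)^(k+1) := pow_le_pow_left₀ hr (by linarith) (k+1)
    have h1 : (r+1)^(k+2) - r^(k+2) = (r+1) * ((r+1)^(k+1) - r^(k+1)) + r^(k+1) := by ring
    have h3 : (r+1) * ((r+1)^(k+1) - r^(k+1)) ≤ (r+1) * ((k+1 : ℝ) * (r+1)^k) :=
      mul_le_mul_of_nonneg_left h2 (by linarith)
    have h4 : (r+1) * ((k+1 : ℝ) * (r+1)^k) = (k+1 : ℝ) * (r+1)^(k+1) := by ring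
    have : (r+1)^(k+2) - r^(k+2) ≤ (k+2 : ℝ) * (r+1)^(k+1) := by
      rw [h1]
      calc (r+1) * ((r+1)^(k+1) - r^(k+1)) + r^(k+1)
          ≤ (k+1 : ℝ) * (r+1)^(k+1) + (r+1)^(k+1) := by linarith
      _ = (k+2 : ℝ) * (r+1)^(k+1) := by ring
    convert this using 2 <;> push_cast <;> ring

/-- Summability of `ζ(a + ck) (R+k+2)^m` from the moment condition. -/
lemma summable_aux {m : ℕ} {ζ : ℝ → ℝ} (hζpos : ∀ t, 0 < ζ t) (hζcont : Continuous ζ)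
    (hζanti : StrictAnti ζ)
    (hmom : IntegrableOn (fun t => ζ t * t ^ m) (Set.Ioi (0:ℝ)))
    (a c R : ℝ) (hc : 0 < c) (hR : 0 ≤ R) :
    Summable (fun k : ℕ => ζ (a + c * k) * (R + k + 2) ^ m) := by
  set h : ℝ → ℝ := fun t => ζ t * t ^ m with hh
  have hcont : Continuous h := by continuity
  set K0 : ℕ := ⌈(1 - a)/c⌉₊ + 1 with hK0
  have hb0 : 1 ≤ a + c * K0 := by
    have h1 : (1 - a)/c ≤ (K0 : ℝ) := le_trans (Nat.le_ceil _) (by exact_mod_cast Nat.le_succ _)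
    have := mul_le_mul_of_nonneg_left h1 hc.le
    rw [mul_div_cancel₀ _ hc.ne'] at this
    linarith
  set b : ℕ → ℝ := fun j => a + c * (K0 + j) with hb
  have hbmono : ∀ j : ℕ, b j ≤ b (j+1) := by
    intro j
    simp only [hb]
    push_cast
    have h := mul_le_mul_of_nonneg_left (by linarith : (K0:ℝ) + j ≤ (K0:ℝ) + (j+1)) hc.le
    linarith
  have hb1 : ∀ j : ℕ, 1 ≤ b j := by
    intro j
    induction j with
    | zero => simpa [hb] using hb0
    | succ j ih => exact le_trans ih (hbmono j)
  set A : ℝ := max 0 (R + K0 + 3) with hA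
  set C : ℝ := A + 1/c with hC
  have hCpos : 0 < C := by
    have : (0:ℝ) ≤ A := le_max_left _ _
    have : (0:ℝ) < 1/c := by positivity
    simp only [hC]
    linarith
  have hlin : ∀ j : ℕ, R + (K0 + j) + 3 ≤ C * b j := by
    intro j
    have hA0 : (0:ℝ) ≤ A := le_max_left _ _
    have hA1 : R + K0 + 3 ≤ A := le_max_right _ _
    have hbj : b j = (a + c * K0) + c * j := by simp only [hb]; push_cast; ring
    have hb0' : (1:ℝ) ≤ a + c * K0 := hb0
    have hj0 : (0:ℝ) ≤ (j:ℝ) := Nat.cast_nonneg j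
    have hinv : (0:ℝ) < 1/c := by positivity
    rw [hbj, hC]
    have e1 : (A + 1/c) * ((a + c*K0) + c*j) = (A + 1/c)*(a + c*K0) + (A + 1/c)*(c*j) := by ring
    rw [e1]
    have e2 : A ≤ (A + 1/c)*(a + c*K0) := by nlinarith
    have e3 : (j:ℝ) ≤ (A + 1/c)*(c*j) := by
      have : (1/c)*(c*j) = j := by field_simp
      nlinarith
    linarith
  -- step bound
  have hstep : ∀ j : ℕ, ζ (b (j+1)) * (b j) ^ m * c ≤ ∫ t in (b j)..(b (j+1)), h t := by
    intro j
    have hint1 : IntervalIntegrable (fun _ : ℝ => ζ (b (j+1)) * (b j) ^ m) volume (b j) (b (j+1)) :=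
      intervalIntegrable_const
    have hint2 : IntervalIntegrable h volume (b j) (b (j+1)) := hcont.intervalIntegrable _ _
    have hmono := intervalIntegral.integral_mono_on (hbmono j) hint1 hint2 (fun t ht => by
      have ht1 : b j ≤ t := ht.1
      have ht2 : t ≤ b (j+1) := ht.2
      have hz : ζ (b (j+1)) ≤ ζ t := hζanti.antitone ht2
      have hp : (b j) ^ m ≤ t ^ m := pow_le_pow_left₀ (le_trans zero_le_one (hb1 j)) ht1 m
      exact mul_le_mul hz hp (pow_nonneg (by linarith [hb1 j]) m) (hζpos t).le)
    rw [intervalIntegral.integral_const] at hmono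
    calc ζ (b (j+1)) * (b j) ^ m * c = (b (j+1) - b j) • (ζ (b (j+1)) * (b j) ^ m) := by
          simp only [smul_eq_mul, hb]; push_cast; ring
    _ ≤ ∫ t in (b j)..(b (j+1)), h t := hmono
  -- partial sums of integrals
  have hpartial : ∀ N : ℕ, ∑ j ∈ Finset.range N, ∫ t in (b j)..(b (j+1)), h t
      ≤ ∫ t in Set.Ioi (0:ℝ), h t := by
    intro N
    rw [intervalIntegral.sum_integral_adjacent_intervals (fun k _ => hcont.intervalIntegrable _ _)]
    have hble : b 0 ≤ b N := by
      induction N with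
      | zero => exact le_refl _
      | succ N ih => exact le_trans ih (hbmono N)
    rw [intervalIntegral.integral_of_le hble]
    apply setIntegral_mono_set hmom
    · filter_upwards [ae_restrict_mem measurableSet_Ioi] with t ht
      have : (0:ℝ) < t := ht
      have := hζpos t
      positivity
    · apply HasSubset.Subset.eventuallyLE
      intro t ht
      have h0 : (0:ℝ) < b 0 := by linarith [hb1 0]
      exact h0.trans ht.1
  -- summability of the shifted sequence
  have hshift : Summable (fun j : ℕ => ζ (a + c * (K0 + 1 + j)) * (R + (K0 + 1 + j) + 2) ^ m) := by
    apply summable_of_sum_range_le (c := (C ^ m / c) * ∫ t in Set.Ioi (0:ℝ), h t)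
    · intro j
      have : (0:ℝ) ≤ R + (K0 + 1 + j) + 2 := by positivity
      have := hζpos (a + c * (K0 + 1 + j))
      positivity
    · intro N
      have hterm : ∀ j : ℕ, ζ (a + c * (K0 + 1 + j)) * (R + (K0 + 1 + j) + 2) ^ m
          ≤ (C ^ m / c) * ∫ t in (b j)..(b (j+1)), h t := by
        intro j
        have hbj1 : a + c * ((K0:ℝ) + 1 + j) = b (j+1) := by simp only [hb]; push_cast; ring
        have hbase : R + ((K0:ℝ) + 1 + j) + 2 = R + (K0 + j) + 3 := by ring
        have h1 : (R + ((K0:ℝ) + 1 + j) + 2) ^ m ≤ (C * b j) ^ m := by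
          rw [hbase]
          exact pow_le_pow_left₀ (by positivity) (hlin j) m
        have h2 : ζ (b (j+1)) * (R + ((K0:ℝ) + 1 + j) + 2) ^ m ≤ ζ (b (j+1)) * (C * b j) ^ m :=
          mul_le_mul_of_nonneg_left h1 (hζpos _).le
        have hcc : C ^ m / c * c = C ^ m := div_mul_cancel₀ _ (ne_of_gt hc)
        have h3 : ζ (b (j+1)) * (C * b j) ^ m = (C ^ m / c) * (ζ (b (j+1)) * (b j) ^ m * c) := by
          calc ζ (b (j+1)) * (C * b j) ^ m
              = (C ^ m / c * c) * (ζ (b (j+1)) * (b j) ^ m) := by rw [hcc, mul_pow]; ring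
          _ = (C ^ m / c) * (ζ (b (j+1)) * (b j) ^ m * c) := by ring
        calc ζ (a + c * ((K0:ℝ) + 1 + j)) * (R + ((K0:ℝ) + 1 + j) + 2) ^ m
            = ζ (b (j+1)) * (R + ((K0:ℝ) + 1 + j) + 2) ^ m := by rw [hbj1]
        _ ≤ ζ (b (j+1)) * (C * b j) ^ m := h2
        _ = (C ^ m / c) * (ζ (b (j+1)) * (b j) ^ m * c) := h3
        _ ≤ (C ^ m / c) * ∫ t in (b j)..(b (j+1)), h t := by
            apply mul_le_mul_of_nonneg_left (hstep j) (by positivity)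
      calc ∑ j ∈ Finset.range N, ζ (a + c * (K0 + 1 + j)) * (R + (K0 + 1 + j) + 2) ^ m
          ≤ ∑ j ∈ Finset.range N, (C ^ m / c) * ∫ t in (b j)..(b (j+1)), h t := by
            apply Finset.sum_le_sum
            intro j _
            have := hterm j
            convert this using 3 <;> push_cast <;> ring
      _ = (C ^ m / c) * ∑ j ∈ Finset.range N, ∫ t in (b j)..(b (j+1)), h t := by
            rw [Finset.mul_sum]
      _ ≤ (C ^ m / c) * ∫ t in Set.Ioi (0:ℝ), h t :=
            mul_le_mul_of_nonneg_left (hpartial N) (by positivity)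
  have heq2 : ∀ j : ℕ, ((j + (K0 + 1) : ℕ) : ℝ) = (K0:ℝ) + 1 + j := by
    intro j; push_cast; ring
  have hsum2 : Summable (fun j : ℕ =>
      ζ (a + c * ((j + (K0 + 1) : ℕ) : ℝ)) * (R + ((j + (K0 + 1) : ℕ) : ℝ) + 2) ^ m) :=
    hshift.congr (fun j => by rw [heq2 j])
  exact (summable_nat_add_iff (K0 + 1)).1 hsum2


/-- Integrability of the radial dominating function. -/
lemma integrable_radial {ζ : ℝ → ℝ} (hζpos : ∀ t, 0 < ζ t) (hζcont : Continuous ζ)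
    (hζanti : StrictAnti ζ) (hn : 1 ≤ n)
    (hmom : IntegrableOn (fun t => ζ t * t ^ (n-1)) (Set.Ioi (0:ℝ)))
    (a c R : ℝ) (hc : 0 < c) (hR : 0 < R) :
    Integrable (fun x : En n => ζ (a + c * max 0 (‖x‖ - R))) := by
  haveI : Nonempty (Fin n) := ⟨⟨0, hn⟩⟩
  set m : ℕ := n - 1 with hm
  have hnm : n = m + 1 := (Nat.succ_pred_eq_of_pos hn).symm
  set F : ℝ → ℝ := fun r => ζ (a + c * max 0 (r - R)) with hF
  have hFcont : Continuous F := by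
    apply hζcont.comp
    exact continuous_const.add (continuous_const.mul ((continuous_const.max
      (continuous_id.sub continuous_const))))
  have hFpos : ∀ r, 0 < F r := fun r => hζpos _
  constructor
  · exact (hFcont.comp continuous_norm).aestronglyMeasurable
  · rw [hasFiniteIntegral_iff_norm]
    have hnorm : ∀ x : En n, ENNReal.ofReal ‖F ‖x‖‖ = ENNReal.ofReal (F ‖x‖) := by
      intro x; rw [Real.norm_of_nonneg (hFpos _).le]
    refine lt_of_eq_of_lt (lintegral_congr (fun x => hnorm x)) ?_
    set G : En n → ℝ≥0∞ := fun x => ENNReal.ofReal (F ‖x‖) with hG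
    have hGmeas : Measurable G :=
      (ENNReal.measurable_ofReal).comp (hFcont.comp continuous_norm).measurable
    set A : ℕ → Set (En n) := fun j =>
      Metric.closedBall (0:En n) (R+j+2) \ Metric.ball (0:En n) (R+j+1) with hA
    have hcover : (Set.univ : Set (En n)) ⊆
        Metric.closedBall (0:En n) (R+1) ∪ ⋃ j, A j := by
      intro x _
      by_cases hx : ‖x‖ ≤ R + 1
      · exact Or.inl (by simp only [Metric.mem_closedBall, dist_zero_right]; exact hx)
      · push_neg at hx
        have hx0 : (1:ℝ) ≤ ‖x‖ - R := by linarith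
        have hk1 : 1 ≤ ⌊‖x‖ - R⌋₊ := Nat.le_floor (by exact_mod_cast hx0)
        have hfl : (⌊‖x‖ - R⌋₊ : ℝ) ≤ ‖x‖ - R := Nat.floor_le (by linarith)
        have hfl2 : ‖x‖ - R < ⌊‖x‖ - R⌋₊ + 1 := Nat.lt_floor_add_one _
        obtain ⟨j, hj⟩ : ∃ j, ⌊‖x‖ - R⌋₊ = j + 1 := ⟨_, (Nat.succ_pred_eq_of_pos hk1).symm⟩
        rw [hj] at hfl hfl2
        refine Or.inr (Set.mem_iUnion.2 ⟨j, ?_⟩)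
        simp only [hA, Set.mem_diff, Metric.mem_closedBall, Metric.mem_ball, dist_zero_right]
        constructor
        · push_cast at hfl2; linarith
        · push_cast at hfl; intro hlt; linarith
    set B : ℝ≥0∞ := volume (Metric.ball (0:En n) 1) with hB
    have hBfin : B ≠ ⊤ := (measure_ball_lt_top).ne
    have hS : Summable (fun k : ℕ => ζ (a + c * k) * (R + k + 2) ^ m) :=
      summable_aux hζpos hζcont hζanti hmom a c R hc hR.le
    set S : ℕ → ℝ := fun k => ζ (a + c * k) * (R + k + 2) ^ m with hSdef
    have hS1 : Summable (fun k : ℕ => S (k + 1)) := (summable_nat_add_iff 1).2 hS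
    have hSnn : ∀ k, 0 ≤ (n:ℝ) * S (k+1) := by
      intro k
      have h1 := (hζpos (a + c * ((k:ℝ)+1))).le
      have h2 : (0:ℝ) ≤ S (k+1) := by
        simp only [hSdef]; push_cast; positivity
      positivity
    -- bound on the inner ball
    have hA0 : ∫⁻ x in Metric.closedBall (0:En n) (R+1), G x
        ≤ ENNReal.ofReal (ζ a) * volume (Metric.closedBall (0:En n) (R+1)) := by
      have hb : ∀ x ∈ Metric.closedBall (0:En n) (R+1), G x ≤ ENNReal.ofReal (ζ a) := by
        intro x _
        apply ENNReal.ofReal_le_ofReal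
        apply hζanti.antitone
        have : 0 ≤ max 0 (‖x‖ - R) := le_max_left _ _
        nlinarith
      calc ∫⁻ x in Metric.closedBall (0:En n) (R+1), G x
          ≤ ∫⁻ _x in Metric.closedBall (0:En n) (R+1), ENNReal.ofReal (ζ a) :=
            setLIntegral_mono measurable_const hb
      _ = ENNReal.ofReal (ζ a) * volume (Metric.closedBall (0:En n) (R+1)) :=
            setLIntegral_const _ _
    -- bound on each annulus
    have hAj : ∀ j : ℕ, ∫⁻ x in A j, G x ≤ ENNReal.ofReal ((n:ℝ) * S (j+1)) * B := by
      intro j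
      have hsub : Metric.ball (0:En n) (R+j+1) ⊆ Metric.closedBall (0:En n) (R+j+2) :=
        (Metric.ball_subset_closedBall).trans
          (Metric.closedBall_subset_closedBall (by push_cast; linarith))
      have hvol : volume (A j) ≤ ENNReal.ofReal ((n:ℝ) * (R+j+2) ^ m) * B := by
        have h1 : volume (A j) = volume (Metric.closedBall (0:En n) (R+j+2))
            - volume (Metric.ball (0:En n) (R+j+1)) := by
          simp only [hA]
          exact measure_diff hsub measurableSet_ball.nullMeasurableSet
            (measure_ball_lt_top).ne
        have hcb : volume (Metric.closedBall (0:En n) (R+j+2))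
            = ENNReal.ofReal ((R+(j:ℝ)+2) ^ n) * B := by
          rw [Measure.addHaar_closedBall _ _ (by positivity : (0:ℝ) ≤ R+(j:ℝ)+2)]
          rw [finrank_euclideanSpace_fin]
        have hob : volume (Metric.ball (0:En n) (R+j+1))
            = ENNReal.ofReal ((R+(j:ℝ)+1) ^ n) * B := by
          rw [Measure.addHaar_ball _ _ (by positivity : (0:ℝ) ≤ R+(j:ℝ)+1)]
          rw [finrank_euclideanSpace_fin]
        rw [h1, hcb, hob, ← ENNReal.sub_mul (fun _ _ => hBfin),
          ← ENNReal.ofReal_sub _ (by positivity)]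
        apply mul_le_mul_left (ENNReal.ofReal_le_ofReal _)
        have hps := pow_succ_sub_le m (R+(j:ℝ)+1) (by positivity)
        calc (R+(j:ℝ)+2) ^ n - (R+(j:ℝ)+1) ^ n
            = ((R+(j:ℝ)+1)+1) ^ (m+1) - ((R+(j:ℝ)+1)) ^ (m+1) := by rw [← hnm]; ring_nf
        _ ≤ (m+1 : ℝ) * ((R+(j:ℝ)+1)+1) ^ m := hps
        _ = (n:ℝ) * (R+(j:ℝ)+2) ^ m := by rw [hnm]; push_cast; ring_nf
      have hb : ∀ x ∈ A j, G x ≤ ENNReal.ofReal (ζ (a + c * ((j:ℝ)+1))) := by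
        intro x hx
        apply ENNReal.ofReal_le_ofReal
        apply hζanti.antitone
        simp only [hA, Set.mem_diff, Metric.mem_closedBall, Metric.mem_ball,
          dist_zero_right, not_lt] at hx
        have h1 : R + (j:ℝ) + 1 ≤ ‖x‖ := hx.2
        have h2 : ((j:ℝ)+1) ≤ max 0 (‖x‖ - R) := le_max_of_le_right (by linarith)
        nlinarith
      have hlast : ENNReal.ofReal (ζ (a + c * ((j:ℝ)+1))) * ENNReal.ofReal ((n:ℝ) * (R+j+2) ^ m)
          ≤ ENNReal.ofReal ((n:ℝ) * S (j+1)) := by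
        rw [← ENNReal.ofReal_mul (hζpos _).le]
        apply ENNReal.ofReal_le_ofReal
        have hcast : ((j+1 : ℕ) : ℝ) = (j:ℝ) + 1 := by push_cast; ring
        have hple : (R+(j:ℝ)+2) ^ m ≤ (R+((j:ℝ)+1)+2) ^ m :=
          pow_le_pow_left₀ (by positivity) (by linarith) m
        have hzp := (hζpos (a + c * ((j:ℝ)+1))).le
        have h5 := mul_le_mul_of_nonneg_left hple hzp
        have h6 := mul_le_mul_of_nonneg_left h5 (Nat.cast_nonneg (α := ℝ) n)
        simp only [hSdef, hcast]
        nlinarith [h6]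
      calc ∫⁻ x in A j, G x
          ≤ ∫⁻ _x in A j, ENNReal.ofReal (ζ (a + c * ((j:ℝ)+1))) :=
            setLIntegral_mono measurable_const hb
      _ = ENNReal.ofReal (ζ (a + c * ((j:ℝ)+1))) * volume (A j) := setLIntegral_const _ _
      _ ≤ ENNReal.ofReal (ζ (a + c * ((j:ℝ)+1))) * (ENNReal.ofReal ((n:ℝ) * (R+j+2) ^ m) * B) :=
            mul_le_mul_right hvol _
      _ = (ENNReal.ofReal (ζ (a + c * ((j:ℝ)+1))) * ENNReal.ofReal ((n:ℝ) * (R+j+2) ^ m)) * B := by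
            rw [mul_assoc]
      _ ≤ ENNReal.ofReal ((n:ℝ) * S (j+1)) * B := mul_le_mul_left hlast _
    -- assemble
    have htail : ∑' j, ∫⁻ x in A j, G x ≤ (∑' j, ENNReal.ofReal ((n:ℝ) * S (j+1))) * B := by
      calc ∑' j, ∫⁻ x in A j, G x ≤ ∑' j, ENNReal.ofReal ((n:ℝ) * S (j+1)) * B :=
            ENNReal.tsum_le_tsum hAj
      _ = (∑' j, ENNReal.ofReal ((n:ℝ) * S (j+1))) * B := ENNReal.tsum_mul_right
    have htailfin : (∑' j, ENNReal.ofReal ((n:ℝ) * S (j+1))) * B < ⊤ := by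
      apply ENNReal.mul_lt_top _ hBfin.lt_top
      rw [← ENNReal.ofReal_tsum_of_nonneg hSnn (hS1.mul_left (n:ℝ))]
      exact ENNReal.ofReal_lt_top
    calc ∫⁻ x : En n, G x = ∫⁻ x in Set.univ, G x := (setLIntegral_univ _).symm
    _ ≤ ∫⁻ x in Metric.closedBall (0:En n) (R+1) ∪ ⋃ j, A j, G x :=
          lintegral_mono_set hcover
    _ ≤ (∫⁻ x in Metric.closedBall (0:En n) (R+1), G x) + ∫⁻ x in ⋃ j, A j, G x :=
          lintegral_union_le _ _ _
    _ ≤ (ENNReal.ofReal (ζ a) * volume (Metric.closedBall (0:En n) (R+1)))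
          + ∑' j, ∫⁻ x in A j, G x := by
          exact add_le_add hA0 (lintegral_iUnion_le _ _)
    _ ≤ (ENNReal.ofReal (ζ a) * volume (Metric.closedBall (0:En n) (R+1)))
          + (∑' j, ENNReal.ofReal ((n:ℝ) * S (j+1))) * B := add_le_add_right htail _
    _ < ⊤ := ENNReal.add_lt_top.2
          ⟨ENNReal.mul_lt_top ENNReal.ofReal_lt_top measure_closedBall_lt_top, htailfin⟩

/-- Integrability of `zeval ζ ∘ u` for `u ∈ Conv_c^{(n)}`. -/
lemma integrable_zeval {ζ : ℝ → ℝ} (hζpos : ∀ t, 0 < ζ t) (hζcont : Continuous ζ)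
    (hζanti : StrictAnti ζ) (hn : 1 ≤ n)
    (hmom : IntegrableOn (fun t => ζ t * t ^ (n-1)) (Set.Ioi (0:ℝ)))
    {u : En n → EReal} (hu : ConvCd n u) :
    Integrable (fun x : En n => zeval ζ (u x)) := by
  obtain ⟨x0, a, c, R, hc, hR, hgrow⟩ := growth hu
  have hrad : Integrable (fun x : En n => ζ (a + c * max 0 (‖x‖ - R))) :=
    integrable_radial hζpos hζcont hζanti hn hmom a c R hc hR
  have hg : Integrable (fun x : En n => ζ (a + c * max 0 (‖x - x0‖ - R))) :=
    hrad.comp_sub_right x0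
  have hmeasu : Measurable u := hu.1.2.2.1.measurable
  have hmeasz : Measurable (zeval ζ) := by
    unfold zeval
    exact Measurable.ite (measurableSet_singleton (⊤ : EReal))
      measurable_const (hζcont.measurable.comp measurable_ereal_toReal)
  apply hg.mono ((hmeasz.comp hmeasu).aestronglyMeasurable)
  apply Filter.Eventually.of_forall
  intro x
  show ‖zeval ζ (u x)‖ ≤ ‖ζ (a + c * max 0 (‖x - x0‖ - R))‖
  rw [Real.norm_of_nonneg (zeval_nonneg hζpos _), Real.norm_of_nonneg (hζpos _).le]
  have h1 := hgrow x
  have h2 := zeval_le hζpos hζanti (s := ((a + c * max 0 (‖x - x0‖ - R) : ℝ) : EReal))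
    (EReal.coe_ne_bot _) h1
  calc zeval ζ (u x) ≤ zeval ζ ((a + c * max 0 (‖x - x0‖ - R) : ℝ) : EReal) := h2
  _ = ζ (a + c * max 0 (‖x - x0‖ - R)) := by
      unfold zeval
      rw [if_neg (EReal.coe_ne_top _)]
      rw [EReal.toReal_coe]


/-- Convexity of the effective domain. -/
lemma convex_dom {u : En n → EReal} (hbot : ∀ x, u x ≠ ⊥) (hc : Convex ℝ (epiSet u)) :
    Convex ℝ {x | u x ≠ ⊤} := by
  intro y hy z hz a b ha hb hab
  have hyr : u y ≤ (((u y).toReal : ℝ) : EReal) := le_of_eq (EReal.coe_toReal hy (hbot y)).symm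
  have hzr : u z ≤ (((u z).toReal : ℝ) : EReal) := le_of_eq (EReal.coe_toReal hz (hbot z)).symm
  have hb' : b = 1 - a := by linarith
  subst hb'
  have := convex_comb hc hyr hzr ha (by linarith)
  exact ne_top_of_le_ne_top (EReal.coe_ne_top _) this

end Stmt8

theorem statement8 (n : ℕ) (hn : 1 ≤ n)
    (ζ : ℝ → ℝ) (hζpos : ∀ t, 0 < ζ t) (hζcont : Continuous ζ) (hζanti : StrictAnti ζ)
    (hmom : IntegrableOn (fun t => ζ t * t ^ (n - 1)) (Set.Ioi (0:ℝ)))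
    (u v : En n → EReal) (hu : ConvCd n u) (hv : ConvCd n v)
    (hsub : epiSet u ⊆ epiSet v)
    (heq : ∫ x : En n, zeval ζ (u x) = ∫ x : En n, zeval ζ (v x)) :
    u = v := by
  classical
  open Stmt8 in
  have hbotu := hu.1.1
  have hbotv := hv.1.1
  have hle : ∀ x, v x ≤ u x := Stmt8.le_of_epi_subset hbotu hsub
  have hzle : ∀ x, zeval ζ (u x) ≤ zeval ζ (v x) :=
    fun x => Stmt8.zeval_le hζpos hζanti (hbotv x) (hle x)
  have hintu := Stmt8.integrable_zeval hζpos hζcont hζanti hn hmom hu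
  have hintv := Stmt8.integrable_zeval hζpos hζcont hζanti hn hmom hv
  have hdiff : Integrable (fun x => zeval ζ (v x) - zeval ζ (u x)) := hintv.sub hintu
  have hzero : ∫ x : En n, (zeval ζ (v x) - zeval ζ (u x)) = 0 := by
    rw [integral_sub hintv hintu, heq, sub_self]
  have haezero : (fun x => zeval ζ (v x) - zeval ζ (u x)) =ᵐ[volume] 0 :=
    (integral_eq_zero_iff_of_nonneg (fun x => sub_nonneg.2 (hzle x)) hdiff).1 hzero
  have haeeq : ∀ᵐ x : En n ∂volume, u x = v x := by
    filter_upwards [haezero] with x hx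
    have hzeq : zeval ζ (v x) = zeval ζ (u x) := by
      have : zeval ζ (v x) - zeval ζ (u x) = 0 := hx
      linarith
    exact (Stmt8.zeval_eq_imp hζpos hζanti (hbotv x) (hle x) hzeq).symm
  -- density of the coincidence set
  have hdense : ∀ (z : En n) (ε : ℝ), 0 < ε → ∃ y, dist y z < ε ∧ u y = v y := by
    intro z ε hε
    by_contra hcon
    push_neg at hcon
    have hsubn : Metric.ball z ε ⊆ {x | ¬ u x = v x} := by
      intro y hy
      exact fun h => absurd h (hcon y (Metric.mem_ball.1 hy))
    have h0 : volume {x : En n | ¬ u x = v x} = 0 := haeeq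
    have := measure_mono (μ := volume) hsubn
    rw [h0] at this
    exact absurd (le_antisymm this zero_le)
      (Metric.measure_ball_pos volume z hε).ne'
  -- everywhere equality
  have hdomconv : Convex ℝ {x | v x ≠ ⊤} := Stmt8.convex_dom hbotv hv.1.2.2.2.1
  obtain ⟨x1, hx1⟩ := hv.2
  have hx1d : x1 ∈ {x | v x ≠ ⊤} := interior_subset hx1
  set g : En n → ℝ := fun y => (v y).toReal with hg
  have hgconv : ConvexOn ℝ (interior {x | v x ≠ ⊤}) g := by
    refine ⟨hdomconv.interior, ?_⟩
    intro y hy z hz a b ha hb hab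
    have hyd : v y ≠ ⊤ := interior_subset hy
    have hzd : v z ≠ ⊤ := interior_subset hz
    have hb' : b = 1 - a := by linarith
    subst hb'
    have hyr : v y ≤ ((g y : ℝ) : EReal) := le_of_eq (EReal.coe_toReal hyd (hbotv y)).symm
    have hzr : v z ≤ ((g z : ℝ) : EReal) := le_of_eq (EReal.coe_toReal hzd (hbotv z)).symm
    have hcomb := Stmt8.convex_comb hv.1.2.2.2.1 hyr hzr ha (by linarith)
    have h1 : (v (a • y + (1-a) • z)).toReal ≤ a * g y + (1-a) * g z := by
      have := EReal.toReal_le_toReal hcomb (hbotv _) (EReal.coe_ne_top _)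
      rwa [EReal.toReal_coe] at this
    simpa [smul_eq_mul] using h1
  have hgcont : ContinuousOn g (interior {x | v x ≠ ⊤}) :=
    hgconv.continuousOn isOpen_interior
  funext x
  refine le_antisymm ?_ (hle x)
  by_cases hvx : v x = ⊤
  · rw [hvx]; exact le_top
  -- setup of the approximating sequence
  set lam : ℕ → ℝ := fun k => 1 / (k + 2) with hlam
  have hlampos : ∀ k, 0 < lam k := by intro k; positivity
  have hlamlt : ∀ k, lam k < 1 := by
    intro k
    rw [hlam]
    rw [div_lt_one (by positivity)]
    have : (0:ℝ) ≤ (k:ℝ) := Nat.cast_nonneg k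
    linarith
  set xk : ℕ → En n := fun k => lam k • x1 + (1 - lam k) • x with hxk
  have hxkint : ∀ k, xk k ∈ interior {x | v x ≠ ⊤} := by
    intro k
    apply hdomconv.openSegment_interior_closure_subset_interior hx1 (subset_closure hvx)
    exact ⟨lam k, 1 - lam k, hlampos k, by linarith [hlamlt k], by linarith, rfl⟩
  have hxkdist : ∀ k, dist (xk k) x = lam k * ‖x1 - x‖ := by
    intro k
    rw [dist_eq_norm]
    have : xk k - x = lam k • (x1 - x) := by
      simp only [hxk]; module
    rw [this, norm_smul, Real.norm_eq_abs, abs_of_pos (hlampos k)]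
  have hck : ∀ k, g (xk k) ≤ lam k * g x1 + (1 - lam k) * g x := by
    intro k
    have hyr : v x1 ≤ ((g x1 : ℝ) : EReal) := le_of_eq (EReal.coe_toReal hx1d (hbotv x1)).symm
    have hzr : v x ≤ ((g x : ℝ) : EReal) := le_of_eq (EReal.coe_toReal hvx (hbotv x)).symm
    have hcomb := Stmt8.convex_comb hv.1.2.2.2.1 hyr hzr (hlampos k).le (hlamlt k).le
    have := EReal.toReal_le_toReal hcomb (hbotv _) (EReal.coe_ne_top _)
    rwa [EReal.toReal_coe] at this
  -- choose approximating points in the coincidence set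
  have hex : ∀ k : ℕ, ∃ y, dist y (xk k) < lam k ∧ y ∈ interior {x | v x ≠ ⊤} ∧
      g y ≤ g (xk k) + lam k ∧ u y = v y := by
    intro k
    have hca : ContinuousAt g (xk k) := hgcont.continuousAt (isOpen_interior.mem_nhds (hxkint k))
    obtain ⟨d1, hd1pos, hd1⟩ := Metric.continuousAt_iff.1 hca (lam k) (hlampos k)
    obtain ⟨d2, hd2pos, hd2⟩ := Metric.isOpen_iff.1 isOpen_interior (xk k) (hxkint k)
    obtain ⟨y, hyd, hyeq⟩ := hdense (xk k) (min (min d1 d2) (lam k))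
      (lt_min (lt_min hd1pos hd2pos) (hlampos k))
    refine ⟨y, lt_of_lt_of_le hyd (min_le_right _ _), ?_, ?_, hyeq⟩
    · exact hd2 (Metric.mem_ball.2 (lt_of_lt_of_le hyd ((min_le_left _ _).trans (min_le_right _ _))))
    · have := hd1 (lt_of_lt_of_le hyd ((min_le_left _ _).trans (min_le_left _ _)))
      rw [Real.dist_eq] at this
      have := abs_lt.1 this
      linarith [this.2]
  choose y hy1 hy2 hy3 hy4 using hex
  have hlamtend : Tendsto lam atTop (𝓝 0) := by
    have h1 : Tendsto (fun k : ℕ => ((k:ℝ) + 2)) atTop atTop := by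
      apply tendsto_atTop_add_const_right
      exact tendsto_natCast_atTop_atTop
    simp only [hlam, one_div]
    exact h1.inv_tendsto_atTop
  have hytend : Tendsto y atTop (𝓝 x) := by
    rw [tendsto_iff_dist_tendsto_zero]
    apply squeeze_zero (g := fun k => lam k + lam k * ‖x1 - x‖) (fun k => dist_nonneg)
    · intro k
      calc dist (y k) x ≤ dist (y k) (xk k) + dist (xk k) x := dist_triangle _ _ _
      _ ≤ lam k + lam k * ‖x1 - x‖ := by
          have h1 := (hy1 k).le
          have h2 := hxkdist k
          linarith
    · have : Tendsto (fun k => lam k + lam k * ‖x1 - x‖) atTop (𝓝 (0 + 0 * ‖x1 - x‖)) :=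
        hlamtend.add (hlamtend.mul_const _)
      simpa using this
  -- lower semicontinuity
  have hlsc := hu.1.2.2.1
  have key1 : u x ≤ Filter.liminf (fun k => u (y k)) atTop := by
    by_contra hcon
    push_neg at hcon
    obtain ⟨b, hb1, hb2⟩ := exists_between hcon
    have hev : ∀ᶠ z in 𝓝 x, b < u z := hlsc x b hb2
    have hev2 : ∀ᶠ k in atTop, b < u (y k) := hytend.eventually hev
    have : b ≤ Filter.liminf (fun k => u (y k)) atTop :=
      Filter.le_liminf_of_le (by isBoundedDefault) (hev2.mono (fun k hk => hk.le))
    exact absurd (lt_of_le_of_lt this hb1) (lt_irrefl _)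
  have key2 : Filter.liminf (fun k => u (y k)) atTop ≤ v x := by
    have hbd : ∀ k, u (y k) ≤ (((lam k * g x1 + (1 - lam k) * g x + lam k : ℝ)) : EReal) := by
      intro k
      have h1 : u (y k) = v (y k) := hy4 k
      have h2 : v (y k) = ((g (y k) : ℝ) : EReal) :=
        (EReal.coe_toReal (interior_subset (hy2 k)) (hbotv _)).symm
      rw [h1, h2]
      apply EReal.coe_le_coe_iff.2
      linarith [hy3 k, hck k]
    have htend2 : Tendsto (fun k => (((lam k * g x1 + (1 - lam k) * g x + lam k : ℝ)) : EReal))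
        atTop (𝓝 ((g x : ℝ) : EReal)) := by
      apply (continuous_coe_real_ereal.tendsto _).comp
      have : Tendsto (fun k => lam k * g x1 + (1 - lam k) * g x + lam k) atTop
          (𝓝 (0 * g x1 + (1 - 0) * g x + 0)) := by
        apply Tendsto.add _ hlamtend
        apply Tendsto.add (hlamtend.mul_const _)
        exact (tendsto_const_nhds.sub hlamtend).mul_const _
      simpa using this
    calc Filter.liminf (fun k => u (y k)) atTop
        ≤ Filter.liminf (fun k => (((lam k * g x1 + (1 - lam k) * g x + lam k : ℝ)) : EReal)) atTop :=
          Filter.liminf_le_liminf (Filter.Eventually.of_forall hbd)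
    _ = ((g x : ℝ) : EReal) := htend2.liminf_eq
    _ = v x := EReal.coe_toReal hvx (hbotv x)
  exact le_trans key1 key2
end
end
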